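/- arXiv:2207.08368 — 4 statements merged into one kernel-verified Lean document; each statement's English description precedes it below -/
import Mathlib

section
/- Let α be a real number and let μ be a positive Borel measure on [0,1) with moments μ_n = ∫_{[0,1)} t^n dμ(t). Suppose there exist ε > 0 and C > 0 such that μ_n ≤ C·n^{-(α/2+ε)} for all n ≥ 1. Then there exists a constant C' > 0 such that for every complex sequence (a_k)_{k≥0} with Σ_{k=0}^∞ (k+1)^{1-α}|a_k|² < ∞ and every n ∈ ℕ, one has Σ_{k=0}^∞ μ_{n+k}|a_k| ≤ C'·(Σ_{k=0}^∞ (k+1)^{1-α}|a_k|²)^{1/2}. In particular, for each n the series Σ_{k=0}^∞ μ_{n+k} a_k converges absolutely, and hence the power series Σ_{n=0}^∞ (Σ_{k=0}^∞ μ_{n+k} a_k)(n+1) z^n defines an analytic function on the open unit disk. -/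
open MeasureTheory

/-- The `n`-th moment of a positive Borel measure on `[0,1)`. -/
noncomputable def moment (μ : Measure ℝ) (n : ℕ) : ℝ :=
  ∫ t in Set.Ico (0 : ℝ) 1, t ^ n ∂μ

lemma moment_nonneg (μ : Measure ℝ) (n : ℕ) : 0 ≤ moment μ n :=
  setIntegral_nonneg measurableSet_Ico fun t ht => pow_nonneg ht.1 n

lemma moment_integrableOn (μ : Measure ℝ) [IsFiniteMeasure μ] (n : ℕ) :
    IntegrableOn (fun t : ℝ => t ^ n) (Set.Ico 0 1) μ := by
  refine Measure.integrableOn_of_bounded (M := 1) (measure_ne_top μ _)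
    (continuous_pow n).aestronglyMeasurable ?_
  refine (ae_restrict_iff' measurableSet_Ico).2 (Filter.Eventually.of_forall fun t ht => ?_)
  rw [Real.norm_eq_abs, abs_pow]
  exact pow_le_one₀ (abs_nonneg t) (abs_le.2 ⟨by linarith [ht.1], ht.2.le⟩)

lemma moment_anti (μ : Measure ℝ) [IsFiniteMeasure μ] {n m : ℕ} (h : n ≤ m) :
    moment μ m ≤ moment μ n :=
  setIntegral_mono_on (moment_integrableOn μ m) (moment_integrableOn μ n) measurableSet_Ico
    fun t ht => pow_le_pow_of_le_one ht.1 ht.2.le h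

lemma rpow_succ_le (p : ℝ) {x : ℝ} (hx : 1 ≤ x) :
    (x + 1) ^ p ≤ 2 ^ |p| * x ^ p := by
  have hx0 : (0:ℝ) < x := by linarith
  have h2 : (1:ℝ) ≤ 2 ^ |p| := by
    have := Real.rpow_le_rpow_of_exponent_le (x := 2) one_le_two (abs_nonneg p)
    simpa using this
  rcases le_or_gt 0 p with hp | hp
  · calc (x + 1) ^ p ≤ (2 * x) ^ p :=
          Real.rpow_le_rpow (by linarith) (by linarith) hp
      _ = 2 ^ p * x ^ p := Real.mul_rpow (by norm_num) hx0.le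
      _ ≤ 2 ^ |p| * x ^ p := by rw [abs_of_nonneg hp]
  · calc (x + 1) ^ p ≤ x ^ p := Real.rpow_le_rpow_of_nonpos hx0 (by linarith) hp.le
      _ ≤ 2 ^ |p| * x ^ p := by
          nth_rewrite 1 [← one_mul (x ^ p)]
          exact mul_le_mul_of_nonneg_right h2 (Real.rpow_nonneg hx0.le p)

/-- Cauchy–Schwarz inequality for infinite series of nonnegative reals. -/
lemma tsum_mul_le_sqrt (f g : ℕ → ℝ) (hf0 : ∀ k, 0 ≤ f k) (hg0 : ∀ k, 0 ≤ g k)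
    (hf : Summable fun k => f k ^ 2) (hg : Summable fun k => g k ^ 2) :
    Summable (fun k => f k * g k) ∧
      ∑' k, f k * g k ≤ Real.sqrt (∑' k, f k ^ 2) * Real.sqrt (∑' k, g k ^ 2) := by
  have hs : Summable fun k => f k * g k := by
    refine Summable.of_nonneg_of_le (fun k => mul_nonneg (hf0 k) (hg0 k)) (fun k => ?_)
      ((hf.add hg).div_const 2)
    have := two_mul_le_add_sq (f k) (g k)
    show f k * g k ≤ (f k ^ 2 + g k ^ 2) / 2
    linarith
  refine ⟨hs, Summable.tsum_le_of_sum_le hs fun s => ?_⟩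
  have h1 : (∑ k ∈ s, f k * g k) ^ 2 ≤ (∑ k ∈ s, f k ^ 2) * (∑ k ∈ s, g k ^ 2) :=
    Finset.sum_mul_sq_le_sq_mul_sq s f g
  calc ∑ k ∈ s, f k * g k
      = Real.sqrt ((∑ k ∈ s, f k * g k) ^ 2) :=
        (Real.sqrt_sq (Finset.sum_nonneg fun k _ => mul_nonneg (hf0 k) (hg0 k))).symm
    _ ≤ Real.sqrt ((∑' k, f k ^ 2) * (∑' k, g k ^ 2)) := by
        apply Real.sqrt_le_sqrt
        refine h1.trans (mul_le_mul (Summable.sum_le_tsum s (fun k _ => sq_nonneg _) hf)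
          (Summable.sum_le_tsum s (fun k _ => sq_nonneg _) hg)
          (Finset.sum_nonneg fun k _ => sq_nonneg _) (tsum_nonneg fun k => sq_nonneg _))
    _ = Real.sqrt (∑' k, f k ^ 2) * Real.sqrt (∑' k, g k ^ 2) :=
        Real.sqrt_mul (tsum_nonneg fun k => sq_nonneg _) _

/-- If the moments satisfy `μ_n = O(n^{-(α/2+ε)})` for some `ε > 0`, then the
Derivative-Hilbert operator is well defined on the Dirichlet space `D_α`. -/
theorem stmt_0 (α : ℝ) (μ : Measure ℝ) [IsFiniteMeasure μ]
    (hmom : ∃ ε > (0 : ℝ), ∃ C > (0 : ℝ), ∀ n : ℕ, 1 ≤ n →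
      moment μ n ≤ C * (n : ℝ) ^ (-(α / 2 + ε))) :
    ∃ C' > (0 : ℝ), ∀ a : ℕ → ℂ,
      Summable (fun k : ℕ => ((k : ℝ) + 1) ^ (1 - α) * ‖a k‖ ^ 2) →
      (∀ n : ℕ, ∑' k : ℕ, moment μ (n + k) * ‖a k‖ ≤
        C' * (∑' k : ℕ, ((k : ℝ) + 1) ^ (1 - α) * ‖a k‖ ^ 2) ^ ((1 : ℝ) / 2)) ∧
      (∀ n : ℕ, Summable (fun k : ℕ => moment μ (n + k) * ‖a k‖)) ∧
      AnalyticOnNhd ℂ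
        (fun z : ℂ => ∑' n : ℕ, (∑' k : ℕ, (moment μ (n + k) : ℂ) * a k) * ((n : ℂ) + 1) * z ^ n)
        (Metric.ball 0 1) := by
  obtain ⟨ε, hε, C, hC, hB⟩ := hmom
  -- the dominating sequence
  set h : ℕ → ℝ := fun k => moment μ k ^ 2 * ((k : ℝ) + 1) ^ (α - 1) with hhdef
  have hh0 : ∀ k, 0 ≤ h k := fun k =>
    mul_nonneg (sq_nonneg _) (Real.rpow_nonneg (by positivity) _)
  have hhs : Summable h := by
    rw [← summable_nat_add_iff 1]
    have hG : Summable (fun m : ℕ => (C ^ 2 * 2 ^ |α - 1|) * (m : ℝ) ^ (-1 - 2 * ε)) :=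
      (Real.summable_nat_rpow.mpr (by linarith)).mul_left _
    refine Summable.of_nonneg_of_le (fun k => hh0 _) (fun k => ?_)
      ((summable_nat_add_iff 1).mpr hG)
    -- h (k+1) ≤ C² 2^{|α-1|} (k+1)^{-1-2ε}
    set m : ℕ := k + 1
    have hm : 1 ≤ m := Nat.le_add_left 1 k
    have hm1 : (1:ℝ) ≤ (m:ℝ) := by exact_mod_cast hm
    have hm0 : (0:ℝ) < (m:ℝ) := by linarith
    calc h m = moment μ m ^ 2 * ((m : ℝ) + 1) ^ (α - 1) := rfl
      _ ≤ (C * (m:ℝ) ^ (-(α/2+ε))) ^ 2 * (2 ^ |α-1| * (m:ℝ) ^ (α-1)) := by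
          refine mul_le_mul (pow_le_pow_left₀ (moment_nonneg μ m) (hB m hm) 2)
            (rpow_succ_le (α-1) hm1) (Real.rpow_nonneg (by positivity) _) (by positivity)
      _ = (C ^ 2 * 2 ^ |α-1|) *
            ((m:ℝ) ^ (-(α/2+ε)) * (m:ℝ) ^ (-(α/2+ε)) * (m:ℝ) ^ (α-1)) := by ring
      _ = (C ^ 2 * 2 ^ |α-1|) * (m : ℝ) ^ (-1 - 2 * ε) := by
          rw [← Real.rpow_add hm0, ← Real.rpow_add hm0]
          congr 1
          ring
  set B : ℝ := ∑' k, h k with hBdef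
  have hB0 : 0 ≤ B := tsum_nonneg fun k => hh0 k
  refine ⟨Real.sqrt B + 1, by positivity, fun a ha => ?_⟩
  set T : ℝ := ∑' k : ℕ, ((k : ℝ) + 1) ^ (1 - α) * ‖a k‖ ^ 2 with hTdef
  have hT0 : 0 ≤ T := tsum_nonneg fun k =>
    mul_nonneg (Real.rpow_nonneg (by positivity) _) (sq_nonneg _)
  -- key Cauchy–Schwarz estimate for each n
  have key : ∀ n : ℕ, Summable (fun k : ℕ => moment μ (n + k) * ‖a k‖) ∧
      ∑' k : ℕ, moment μ (n + k) * ‖a k‖ ≤ (Real.sqrt B + 1) * T ^ ((1:ℝ)/2) := by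
    intro n
    set f : ℕ → ℝ := fun k => moment μ (n + k) * ((k:ℝ) + 1) ^ ((α - 1)/2) with hfdef
    set g : ℕ → ℝ := fun k => ((k:ℝ) + 1) ^ ((1 - α)/2) * ‖a k‖ with hgdef
    have hk0 : ∀ k : ℕ, (0:ℝ) < (k:ℝ) + 1 := fun k => by positivity
    have hf0 : ∀ k, 0 ≤ f k := fun k =>
      mul_nonneg (moment_nonneg μ _) (Real.rpow_nonneg (hk0 k).le _)
    have hg0 : ∀ k, 0 ≤ g k := fun k =>
      mul_nonneg (Real.rpow_nonneg (hk0 k).le _) (norm_nonneg _)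
    have hfg : ∀ k, f k * g k = moment μ (n + k) * ‖a k‖ := by
      intro k
      have : ((k:ℝ) + 1) ^ ((α - 1)/2) * ((k:ℝ) + 1) ^ ((1 - α)/2) = 1 := by
        rw [← Real.rpow_add (hk0 k)]
        have : (α - 1)/2 + (1 - α)/2 = 0 := by ring
        rw [this, Real.rpow_zero]
      calc f k * g k
          = moment μ (n + k) * ‖a k‖ *
              (((k:ℝ) + 1) ^ ((α - 1)/2) * ((k:ℝ) + 1) ^ ((1 - α)/2)) := by
            simp only [hfdef, hgdef]; ring
        _ = moment μ (n + k) * ‖a k‖ := by rw [this, mul_one]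
    have hf2 : ∀ k, f k ^ 2 = moment μ (n + k) ^ 2 * ((k:ℝ) + 1) ^ (α - 1) := by
      intro k
      have : ((k:ℝ) + 1) ^ ((α - 1)/2) * ((k:ℝ) + 1) ^ ((α - 1)/2) = ((k:ℝ)+1) ^ (α-1) := by
        rw [← Real.rpow_add (hk0 k)]
        congr 1
        ring
      calc f k ^ 2 = moment μ (n + k) ^ 2 *
            (((k:ℝ) + 1) ^ ((α - 1)/2) * ((k:ℝ) + 1) ^ ((α - 1)/2)) := by
            simp only [hfdef]; ring
        _ = _ := by rw [this]
    have hg2 : ∀ k, g k ^ 2 = ((k:ℝ) + 1) ^ (1 - α) * ‖a k‖ ^ 2 := by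
      intro k
      have : ((k:ℝ) + 1) ^ ((1 - α)/2) * ((k:ℝ) + 1) ^ ((1 - α)/2) = ((k:ℝ)+1) ^ (1-α) := by
        rw [← Real.rpow_add (hk0 k)]
        congr 1
        ring
      calc g k ^ 2 = (((k:ℝ) + 1) ^ ((1 - α)/2) * ((k:ℝ) + 1) ^ ((1 - α)/2)) * ‖a k‖ ^ 2 := by
            simp only [hgdef]; ring
        _ = _ := by rw [this]
    have hf2le : ∀ k, f k ^ 2 ≤ h k := by
      intro k
      rw [hf2 k]
      refine mul_le_mul_of_nonneg_right ?_ (Real.rpow_nonneg (hk0 k).le _)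
      exact pow_le_pow_left₀ (moment_nonneg μ _) (moment_anti μ (Nat.le_add_left k n)) 2
    have hfs : Summable fun k => f k ^ 2 :=
      Summable.of_nonneg_of_le (fun k => sq_nonneg _) hf2le hhs
    have hgs : Summable fun k => g k ^ 2 := by
      refine ha.congr fun k => (hg2 k).symm
    obtain ⟨hs, hest⟩ := tsum_mul_le_sqrt f g hf0 hg0 hfs hgs
    constructor
    · exact hs.congr hfg
    · have e1 : ∑' k, moment μ (n + k) * ‖a k‖ = ∑' k, f k * g k :=
        tsum_congr fun k => (hfg k).symm
      have e2 : ∑' k, g k ^ 2 = T := tsum_congr hg2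
      have e3 : Real.sqrt (∑' k, f k ^ 2) ≤ Real.sqrt B + 1 := by
        have : (∑' k, f k ^ 2) ≤ B := Summable.tsum_le_tsum hf2le hfs hhs
        have := Real.sqrt_le_sqrt this
        linarith
      rw [e1]
      calc ∑' k, f k * g k ≤ Real.sqrt (∑' k, f k ^ 2) * Real.sqrt (∑' k, g k ^ 2) := hest
        _ ≤ (Real.sqrt B + 1) * Real.sqrt T := by
            rw [e2]
            exact mul_le_mul_of_nonneg_right e3 (Real.sqrt_nonneg T)
        _ = (Real.sqrt B + 1) * T ^ ((1:ℝ)/2) := by rw [Real.sqrt_eq_rpow T]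
  refine ⟨fun n => (key n).2, fun n => (key n).1, ?_⟩
  -- analyticity
  set M : ℝ := (Real.sqrt B + 1) * T ^ ((1:ℝ)/2) with hMdef
  have hM0 : 0 ≤ M := mul_nonneg (by positivity) (Real.rpow_nonneg hT0 _)
  have habs : ∀ n : ℕ, Summable (fun k : ℕ => ‖(moment μ (n + k) : ℂ) * a k‖) := by
    intro n
    refine ((key n).1).congr fun k => ?_
    rw [norm_mul, Complex.norm_real, Real.norm_eq_abs, abs_of_nonneg (moment_nonneg μ _)]
  have hcoef : ∀ n : ℕ, ‖∑' k : ℕ, (moment μ (n + k) : ℂ) * a k‖ ≤ M := by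
    intro n
    refine (norm_tsum_le_tsum_norm (habs n)).trans ?_
    have : ∑' k : ℕ, ‖(moment μ (n + k) : ℂ) * a k‖ = ∑' k, moment μ (n + k) * ‖a k‖ :=
      tsum_congr fun k => by
        rw [norm_mul, Complex.norm_real, Real.norm_eq_abs, abs_of_nonneg (moment_nonneg μ _)]
    rw [this]
    exact (key n).2
  set b : ℕ → ℂ := fun n => (∑' k : ℕ, (moment μ (n + k) : ℂ) * a k) * ((n : ℂ) + 1) with hbdef
  have hbnorm : ∀ n : ℕ, ‖b n‖ ≤ M * ((n:ℝ) + 1) := by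
    intro n
    rw [hbdef]
    have hn : ‖((n : ℂ) + 1)‖ = (n:ℝ) + 1 := by
      have : ((n : ℂ) + 1) = (((n:ℝ) + 1 : ℝ) : ℂ) := by push_cast; ring
      rw [this, Complex.norm_real, Real.norm_eq_abs, abs_of_nonneg (by positivity)]
    rw [norm_mul, hn]
    exact mul_le_mul_of_nonneg_right (hcoef n) (by positivity)
  set p : FormalMultilinearSeries ℂ ℂ ℂ := FormalMultilinearSeries.ofScalars ℂ b with hpdef
  have hpn : ∀ n, ‖p n‖ = ‖b n‖ := fun n => FormalMultilinearSeries.ofScalars_norm ℂ b n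
  have hrad : 1 ≤ p.radius := by
    apply ENNReal.le_of_forall_nnreal_lt
    intro r hr
    have hr1 : (r:ℝ) < 1 := by exact_mod_cast hr
    have hr0 : (0:ℝ) ≤ (r:ℝ) := r.coe_nonneg
    apply FormalMultilinearSeries.le_radius_of_summable_norm
    have hnr : ‖(r:ℝ)‖ < 1 := by rwa [Real.norm_eq_abs, abs_of_nonneg hr0]
    have h1 : Summable (fun n : ℕ => ((n:ℝ) + 1) * (r:ℝ) ^ n) := by
      have ha1 := summable_pow_mul_geometric_of_norm_lt_one (R := ℝ) 1 hnr
      have ha2 := summable_geometric_of_lt_one hr0 hr1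
      refine (ha1.add ha2).congr fun n => ?_
      simp
      ring
    refine Summable.of_nonneg_of_le (fun n => by positivity) (fun n => ?_) (h1.mul_left M)
    rw [hpn n]
    calc ‖b n‖ * (r:ℝ) ^ n ≤ (M * ((n:ℝ) + 1)) * (r:ℝ) ^ n :=
          mul_le_mul_of_nonneg_right (hbnorm n) (by positivity)
      _ = M * (((n:ℝ) + 1) * (r:ℝ) ^ n) := by ring
  have hpos : 0 < p.radius := lt_of_lt_of_le one_pos hrad
  have hA : AnalyticOnNhd ℂ p.sum (Metric.eball 0 p.radius) :=
    (p.hasFPowerSeriesOnBall hpos).analyticOnNhd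
  have hsub : Metric.ball (0:ℂ) 1 ⊆ Metric.eball (0:ℂ) p.radius := by
    have h1 : Metric.ball (0:ℂ) 1 = Metric.eball (0:ℂ) 1 := by
      rw [← ENNReal.ofReal_one, Metric.emetric_ball]
    rw [h1]
    exact Metric.eball_subset_eball hrad
  have hA2 : AnalyticOnNhd ℂ p.sum (Metric.ball (0:ℂ) 1) := hA.mono hsub
  refine (analyticOnNhd_congr Metric.isOpen_ball (fun z hz => ?_)).mp hA2
  calc p.sum z = ∑' n : ℕ, b n • z ^ n := FormalMultilinearSeries.ofScalars_sum_eq b z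
    _ = ∑' n : ℕ, (∑' k : ℕ, (moment μ (n + k) : ℂ) * a k) * ((n : ℂ) + 1) * z ^ n :=
      tsum_congr fun n => by rw [smul_eq_mul, hbdef]
end

section
/- Let K : (0,∞) × (0,∞) → [0,∞) be a function such that: (i) K is homogeneous of degree −1, i.e., K(λx, λy) = λ^{-1} K(x,y) for all λ, x, y > 0; (ii) ∫_0^∞ K(x,1) x^{-1/2} dx = ∫_0^∞ K(1,y) y^{-1/2} dy = C < ∞; (iii) the function x ↦ K(x,1) x^{-1/2} is strictly decreasing on (0,∞), and likewise y ↦ K(1,y) y^{-1/2} is strictly decreasing on (0,∞). Then for every nonnegative real sequence (a_n)_{n≥1} with Σ_{n=1}^∞ a_n² < ∞, one has Σ_{n=1}^∞ (Σ_{k=1}^∞ K(n,k) a_k)² ≤ C² Σ_{n=1}^∞ a_n². -/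
open MeasureTheory

open scoped ENNReal NNReal

/-- Riemann-sum comparison: for a nonnegative antitone integrable function on `(0,∞)`,
the sum `∑ t * f((k+1)t)` is at most the integral. -/
lemma aux_riemann (f : ℝ → ℝ) (C : ℝ)
    (hf0 : ∀ x ∈ Set.Ioi (0:ℝ), 0 ≤ f x)
    (hint : IntegrableOn f (Set.Ioi 0))
    (hval : ∫ x in Set.Ioi 0, f x = C)
    (hanti : AntitoneOn f (Set.Ioi 0))
    (t : ℝ) (ht : 0 < t) :
    Summable (fun k : ℕ => t * f (((k:ℝ)+1)*t)) ∧
      ∑' k : ℕ, t * f (((k:ℝ)+1)*t) ≤ C := by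
  have hpos : ∀ k : ℕ, 0 < ((k:ℝ)+1)*t := fun k => mul_pos (by positivity) ht
  have hterm0 : ∀ k : ℕ, 0 ≤ t * f (((k:ℝ)+1)*t) := fun k =>
    mul_nonneg ht.le (hf0 _ (hpos k))
  have hIoc : ∀ k : ℕ, Set.Ioc ((k:ℝ)*t) (((k:ℝ)+1)*t) ⊆ Set.Ioi (0:ℝ) := by
    intro k x hx
    exact lt_of_le_of_lt (mul_nonneg (Nat.cast_nonneg k) ht.le) hx.1
  have step : ∀ k : ℕ, t * f (((k:ℝ)+1)*t) ≤ ∫ x in Set.Ioc ((k:ℝ)*t) (((k:ℝ)+1)*t), f x := by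
    intro k
    have hle : (k:ℝ)*t ≤ ((k:ℝ)+1)*t := by nlinarith
    have hintk : IntegrableOn f (Set.Ioc ((k:ℝ)*t) (((k:ℝ)+1)*t)) := hint.mono_set (hIoc k)
    have hmono : ∀ x ∈ Set.Ioc ((k:ℝ)*t) (((k:ℝ)+1)*t), f (((k:ℝ)+1)*t) ≤ f x := by
      intro x hx
      exact hanti (hIoc k hx) (hpos k) hx.2
    calc t * f (((k:ℝ)+1)*t)
        = ∫ _ in Set.Ioc ((k:ℝ)*t) (((k:ℝ)+1)*t), f (((k:ℝ)+1)*t) := by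
          rw [setIntegral_const, Real.volume_real_Ioc_of_le hle,
            smul_eq_mul]
          ring
      _ ≤ ∫ x in Set.Ioc ((k:ℝ)*t) (((k:ℝ)+1)*t), f x := by
          refine setIntegral_mono_on ?_ hintk measurableSet_Ioc hmono
          exact (integrableOn_const_iff (C := f (((k:ℝ)+1)*t))).mpr (Or.inr (by rw [Real.volume_Ioc]; exact ENNReal.ofReal_lt_top))
  have key : ∀ n : ℕ, ∑ k ∈ Finset.range n, t * f (((k:ℝ)+1)*t) ≤ C := by
    intro n
    have adj : ∀ k, k < n → IntervalIntegrable f volume ((k:ℝ)*t) (((k+1:ℕ):ℝ)*t) := by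
      intro k _
      rw [intervalIntegrable_iff_integrableOn_Ioc_of_le (by push_cast; nlinarith)]
      push_cast
      exact hint.mono_set (hIoc k)
    have hsum : ∑ k ∈ Finset.range n, ∫ x in ((k:ℝ)*t)..(((k+1:ℕ):ℝ)*t), f x
        = ∫ x in (((0:ℕ):ℝ)*t)..((n:ℝ)*t), f x := by
      exact intervalIntegral.sum_integral_adjacent_intervals (a := fun k : ℕ => (k:ℝ)*t) adj
    have h1 : ∑ k ∈ Finset.range n, t * f (((k:ℝ)+1)*t)
        ≤ ∑ k ∈ Finset.range n, ∫ x in ((k:ℝ)*t)..(((k+1:ℕ):ℝ)*t), f x := by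
      refine Finset.sum_le_sum (fun k _ => ?_)
      rw [intervalIntegral.integral_of_le (by push_cast; nlinarith)]
      push_cast
      exact step k
    have h2 : ∫ x in (((0:ℕ):ℝ)*t)..((n:ℝ)*t), f x ≤ C := by
      rw [intervalIntegral.integral_of_le (by push_cast; rw [zero_mul]; positivity), ← hval]
      refine setIntegral_mono_set hint ?_ ?_
      · exact (ae_restrict_iff' measurableSet_Ioi).2 (ae_of_all _ hf0)
      · refine HasSubset.Subset.eventuallyLE ?_
        push_cast
        rw [zero_mul]
        exact Set.Ioc_subset_Ioi_self
    calc ∑ k ∈ Finset.range n, t * f (((k:ℝ)+1)*t)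
        ≤ ∑ k ∈ Finset.range n, ∫ x in ((k:ℝ)*t)..(((k+1:ℕ):ℝ)*t), f x := h1
      _ = ∫ x in (((0:ℕ):ℝ)*t)..((n:ℝ)*t), f x := hsum
      _ ≤ C := h2
  exact ⟨summable_of_sum_range_le hterm0 key, Real.tsum_le_of_sum_range_le hterm0 key⟩

lemma aux_summable_of_ne_top (f : ℕ → ℝ) (h0 : ∀ n, 0 ≤ f n)
    (h : ∑' n, ENNReal.ofReal (f n) ≠ ∞) : Summable f := by
  have h1 : (∑' n, ((Real.toNNReal (f n) : ℝ≥0) : ℝ≥0∞)) ≠ ∞ := by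
    simpa [ENNReal.ofReal] using h
  have h2 := NNReal.summable_coe.2 (ENNReal.tsum_coe_ne_top_iff_summable.mp h1)
  exact h2.congr (fun n => Real.coe_toNNReal _ (h0 n))

/-- Cauchy–Schwarz for `ℝ≥0∞`-valued series. -/
lemma aux_cs (f g : ℕ → ℝ≥0∞) :
    (∑' k, f k * g k) ^ 2 ≤ (∑' k, f k ^ 2) * (∑' k, g k ^ 2) := by
  have hconj : Real.HolderConjugate 2 2 := Real.HolderConjugate.two_two
  have hH := ENNReal.lintegral_mul_le_Lp_mul_Lq (Measure.count : Measure ℕ) hconj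
    (measurable_of_countable f).aemeasurable (measurable_of_countable g).aemeasurable
  simp only [Pi.mul_apply, lintegral_count] at hH
  have hsq : ∀ x : ℝ≥0∞, x ^ (2:ℝ) = x ^ 2 := fun x => ENNReal.rpow_two x
  have hhalf : ∀ x : ℝ≥0∞, (x ^ ((1:ℝ)/2)) ^ 2 = x := by
    intro x
    rw [← ENNReal.rpow_two, ← ENNReal.rpow_mul]
    norm_num
  calc (∑' k, f k * g k) ^ 2
      ≤ ((∑' k, f k ^ (2:ℝ)) ^ ((1:ℝ)/2) * (∑' k, g k ^ (2:ℝ)) ^ ((1:ℝ)/2)) ^ 2 := by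
        exact pow_le_pow_left' hH 2
    _ = (∑' k, f k ^ 2) * (∑' k, g k ^ 2) := by
        rw [mul_pow, hhalf, hhalf]
        simp only [hsq]

/-- Hardy–Littlewood–Pólya, Theorem 318: a Hilbert-type inequality for kernels
that are homogeneous of degree `-1`. -/
theorem stmt_1 (K : ℝ → ℝ → ℝ) (C : ℝ)
    (hnonneg : ∀ x y : ℝ, 0 < x → 0 < y → 0 ≤ K x y)
    (hhom : ∀ lam x y : ℝ, 0 < lam → 0 < x → 0 < y →
      K (lam * x) (lam * y) = lam⁻¹ * K x y)
    (hint₁ : IntegrableOn (fun x : ℝ => K x 1 * x ^ (-(1 : ℝ) / 2)) (Set.Ioi 0))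
    (hval₁ : ∫ x in Set.Ioi (0 : ℝ), K x 1 * x ^ (-(1 : ℝ) / 2) = C)
    (hint₂ : IntegrableOn (fun y : ℝ => K 1 y * y ^ (-(1 : ℝ) / 2)) (Set.Ioi 0))
    (hval₂ : ∫ y in Set.Ioi (0 : ℝ), K 1 y * y ^ (-(1 : ℝ) / 2) = C)
    (hanti₁ : StrictAntiOn (fun x : ℝ => K x 1 * x ^ (-(1 : ℝ) / 2)) (Set.Ioi 0))
    (hanti₂ : StrictAntiOn (fun y : ℝ => K 1 y * y ^ (-(1 : ℝ) / 2)) (Set.Ioi 0)) :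
    ∀ a : ℕ → ℝ, (∀ n : ℕ, 0 ≤ a n) → Summable (fun n : ℕ => a n ^ 2) →
      ∑' n : ℕ, (∑' k : ℕ, K ((n : ℝ) + 1) ((k : ℝ) + 1) * a k) ^ 2 ≤
        C ^ 2 * ∑' n : ℕ, a n ^ 2 := by
  intro a ha hsum
  set N : ℕ → ℝ := fun n => (n:ℝ)+1 with hN
  have Npos : ∀ n : ℕ, 0 < N n := fun n => by positivity
  set B : ℕ → ℕ → ℝ := fun n k => K (N n) (N k) with hBdef
  have hB0 : ∀ n k, 0 ≤ B n k := fun n k => hnonneg _ _ (Npos n) (Npos k)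
  set u : ℕ → ℕ → ℝ := fun n k => (N k / N n) ^ (-(1:ℝ)/2) with hudef
  set v : ℕ → ℕ → ℝ := fun n k => (N n / N k) ^ (-(1:ℝ)/2) with hvdef
  have hupos : ∀ n k, 0 < u n k := fun n k =>
    Real.rpow_pos_of_pos (div_pos (Npos k) (Npos n)) _
  have hvpos : ∀ n k, 0 < v n k := fun n k =>
    Real.rpow_pos_of_pos (div_pos (Npos n) (Npos k)) _
  have huv : ∀ n k, v n k = (u n k)⁻¹ := by
    intro n k
    rw [hudef, hvdef]
    simp only
    rw [← Real.inv_rpow (div_pos (Npos k) (Npos n)).le, inv_div]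
  have hC0 : 0 ≤ C := by
    rw [← hval₁]
    refine setIntegral_nonneg measurableSet_Ioi (fun x hx => ?_)
    exact mul_nonneg (hnonneg _ _ hx one_pos) (Real.rpow_nonneg (le_of_lt hx) _)
  -- row bound
  have hrow : ∀ n : ℕ, Summable (fun k => B n k * u n k) ∧ ∑' k, B n k * u n k ≤ C := by
    intro n
    have hr := aux_riemann (fun y => K 1 y * y ^ (-(1:ℝ)/2)) C
      (fun y hy => mul_nonneg (hnonneg _ _ one_pos hy) (Real.rpow_nonneg (le_of_lt hy) _))
      hint₂ hval₂ hanti₂.antitoneOn ((N n)⁻¹) (inv_pos.2 (Npos n))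
    have heq : (fun k : ℕ => B n k * u n k)
        = fun k : ℕ => (N n)⁻¹ * (K 1 (((k:ℝ)+1) * (N n)⁻¹) * (((k:ℝ)+1) * (N n)⁻¹) ^ (-(1:ℝ)/2)) := by
      funext k
      have hy : ((k:ℝ)+1) * (N n)⁻¹ = N k / N n := by rw [div_eq_mul_inv]
      have hBeq : B n k = (N n)⁻¹ * K 1 (N k / N n) := by
        have h1 : N n * 1 = N n := mul_one _
        have h2 : N n * (N k / N n) = N k := by field_simp; exact mul_div_cancel_left₀ _ (Npos n).ne'
        have := hhom (N n) 1 (N k / N n) (Npos n) one_pos (div_pos (Npos k) (Npos n))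
        rw [h1, h2] at this
        exact this
      rw [hy, hBeq, hudef]
      ring
    rw [heq]
    exact hr
  -- column bound
  have hcol : ∀ k : ℕ, Summable (fun n => B n k * v n k) ∧ ∑' n, B n k * v n k ≤ C := by
    intro k
    have hr := aux_riemann (fun x => K x 1 * x ^ (-(1:ℝ)/2)) C
      (fun x hx => mul_nonneg (hnonneg _ _ hx one_pos) (Real.rpow_nonneg (le_of_lt hx) _))
      hint₁ hval₁ hanti₁.antitoneOn ((N k)⁻¹) (inv_pos.2 (Npos k))
    have heq : (fun n : ℕ => B n k * v n k)
        = fun n : ℕ => (N k)⁻¹ * (K (((n:ℝ)+1) * (N k)⁻¹) 1 * (((n:ℝ)+1) * (N k)⁻¹) ^ (-(1:ℝ)/2)) := by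
      funext n
      have hy : ((n:ℝ)+1) * (N k)⁻¹ = N n / N k := by rw [div_eq_mul_inv]
      have hBeq : B n k = (N k)⁻¹ * K (N n / N k) 1 := by
        have h1 : N k * (N n / N k) = N n := by field_simp; exact mul_div_cancel_left₀ _ (Npos k).ne'
        have h2 : N k * 1 = N k := mul_one _
        have := hhom (N k) (N n / N k) 1 (Npos k) (div_pos (Npos n) (Npos k)) one_pos
        rw [h1, h2] at this
        exact this
      rw [hy, hBeq, hvdef]
      ring
    rw [heq]
    exact hr
  -- move to ℝ≥0∞
  set B' : ℕ → ℕ → ℝ≥0∞ := fun n k => ENNReal.ofReal (B n k) with hB'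
  set u' : ℕ → ℕ → ℝ≥0∞ := fun n k => ENNReal.ofReal (u n k) with hu'
  set a' : ℕ → ℝ≥0∞ := fun k => ENNReal.ofReal (a k) with ha'
  set Cc : ℝ≥0∞ := ENNReal.ofReal C with hCc
  have hu'0 : ∀ n k, u' n k ≠ 0 := fun n k => by
    simp [hu', ENNReal.ofReal_eq_zero, not_le, hupos n k]
  have hu'top : ∀ n k, u' n k ≠ ∞ := fun n k => ENNReal.ofReal_ne_top
  have hu'inv : ∀ n k, (u' n k)⁻¹ = ENNReal.ofReal (v n k) := by
    intro n k
    rw [hu', huv n k]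
    exact (ENNReal.ofReal_inv_of_pos (hupos n k)).symm
  have hrow' : ∀ n, ∑' k, B' n k * u' n k ≤ Cc := by
    intro n
    have : ∀ k, B' n k * u' n k = ENNReal.ofReal (B n k * u n k) := fun k =>
      (ENNReal.ofReal_mul (hB0 n k)).symm
    simp only [this]
    rw [← ENNReal.ofReal_tsum_of_nonneg (fun k => mul_nonneg (hB0 n k) (hupos n k).le) (hrow n).1]
    exact ENNReal.ofReal_le_ofReal (hrow n).2
  have hcol' : ∀ k, ∑' n, B' n k * (u' n k)⁻¹ ≤ Cc := by
    intro k
    have : ∀ n, B' n k * (u' n k)⁻¹ = ENNReal.ofReal (B n k * v n k) := fun n => by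
      rw [hu'inv n k]
      exact (ENNReal.ofReal_mul (hB0 n k)).symm
    simp only [this]
    rw [← ENNReal.ofReal_tsum_of_nonneg (fun n => mul_nonneg (hB0 n k) (hvpos n k).le) (hcol k).1]
    exact ENNReal.ofReal_le_ofReal (hcol k).2
  -- Cauchy–Schwarz step
  have hhalf : ∀ x : ℝ≥0∞, (x ^ ((1:ℝ)/2)) ^ 2 = x := by
    intro x
    rw [← ENNReal.rpow_two, ← ENNReal.rpow_mul]
    norm_num
  set S : ℕ → ℝ≥0∞ := fun n => ∑' k, B' n k * (u' n k)⁻¹ * a' k ^ 2 with hS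
  set T : ℕ → ℝ≥0∞ := fun n => ∑' k, B' n k * a' k with hT
  have hCS : ∀ n, T n ^ 2 ≤ Cc * S n := by
    intro n
    have hfg : ∀ k, (B' n k * u' n k) ^ ((1:ℝ)/2) * ((B' n k * (u' n k)⁻¹) ^ ((1:ℝ)/2) * a' k)
        = B' n k * a' k := by
      intro k
      rw [← mul_assoc, ← ENNReal.mul_rpow_of_nonneg _ _ (by norm_num)]
      have : B' n k * u' n k * (B' n k * (u' n k)⁻¹) = B' n k ^ 2 := by
        rw [show B' n k * u' n k * (B' n k * (u' n k)⁻¹)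
            = B' n k * B' n k * (u' n k * (u' n k)⁻¹) by ring,
          ENNReal.mul_inv_cancel (hu'0 n k) (hu'top n k), mul_one, sq]
      rw [this, ← ENNReal.rpow_two, ← ENNReal.rpow_mul]
      norm_num
    have hcs := aux_cs (fun k => (B' n k * u' n k) ^ ((1:ℝ)/2))
      (fun k => (B' n k * (u' n k)⁻¹) ^ ((1:ℝ)/2) * a' k)
    simp only [hfg] at hcs
    have hf2 : ∀ k, ((B' n k * u' n k) ^ ((1:ℝ)/2)) ^ 2 = B' n k * u' n k := fun k => hhalf _
    have hg2 : ∀ k, ((B' n k * (u' n k)⁻¹) ^ ((1:ℝ)/2) * a' k) ^ 2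
        = B' n k * (u' n k)⁻¹ * a' k ^ 2 := by
      intro k
      rw [mul_pow, hhalf]
    simp only [hf2, hg2] at hcs
    calc T n ^ 2 ≤ (∑' k, B' n k * u' n k) * S n := hcs
      _ ≤ Cc * S n := mul_le_mul_left (hrow' n) _
  -- sum over n
  have hmain : ∑' n, T n ^ 2 ≤ Cc ^ 2 * ∑' k, a' k ^ 2 := by
    calc ∑' n, T n ^ 2 ≤ ∑' n, Cc * S n := ENNReal.tsum_le_tsum hCS
      _ = Cc * ∑' n, S n := ENNReal.tsum_mul_left
      _ = Cc * ∑' k, (∑' n, B' n k * (u' n k)⁻¹) * a' k ^ 2 := by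
          rw [hS]
          congr 1
          rw [ENNReal.tsum_comm]
          congr 1
          funext k
          exact ENNReal.tsum_mul_right
      _ ≤ Cc * ∑' k, Cc * a' k ^ 2 := by
          refine mul_le_mul_right (ENNReal.tsum_le_tsum (fun k => ?_)) _
          exact mul_le_mul_left (hcol' k) _
      _ = Cc ^ 2 * ∑' k, a' k ^ 2 := by
          rw [ENNReal.tsum_mul_left, sq, mul_assoc]
  -- translate back to ℝ
  have hsum2 : ∑' k, a' k ^ 2 = ENNReal.ofReal (∑' k, a k ^ 2) := by
    calc ∑' k, a' k ^ 2 = ∑' k, ENNReal.ofReal (a k ^ 2) :=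
          tsum_congr (fun k => (ENNReal.ofReal_pow (ha k) 2).symm)
      _ = ENNReal.ofReal (∑' k, a k ^ 2) :=
          (ENNReal.ofReal_tsum_of_nonneg (fun k => sq_nonneg (a k)) hsum).symm
  have hRHS : Cc ^ 2 * ∑' k, a' k ^ 2 = ENNReal.ofReal (C ^ 2 * ∑' k, a k ^ 2) := by
    rw [hsum2, hCc, ← ENNReal.ofReal_pow hC0, ← ENNReal.ofReal_mul (by positivity)]
  have hRHSne : Cc ^ 2 * ∑' k, a' k ^ 2 ≠ ∞ := by rw [hRHS]; exact ENNReal.ofReal_ne_top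
  have hTne : ∀ n, T n ≠ ∞ := by
    intro n
    intro hcon
    have h1 : T n ^ 2 ≤ Cc ^ 2 * ∑' k, a' k ^ 2 := le_trans (ENNReal.le_tsum n) hmain
    rw [hcon, show ((⊤:ℝ≥0∞)^2) = ⊤ by rw [sq]; exact ENNReal.top_mul_top] at h1
    exact hRHSne (top_le_iff.1 h1)
  have hinner : ∀ n, Summable (fun k => B n k * a k) ∧
      ENNReal.ofReal (∑' k, B n k * a k) = T n := by
    intro n
    have heq : ∀ k, B' n k * a' k = ENNReal.ofReal (B n k * a k) := fun k =>
      (ENNReal.ofReal_mul (hB0 n k)).symm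
    have hTn : T n = ∑' k, ENNReal.ofReal (B n k * a k) := by
      rw [hT]; exact tsum_congr heq
    have hs : Summable (fun k => B n k * a k) := by
      refine aux_summable_of_ne_top _ (fun k => mul_nonneg (hB0 n k) (ha k)) ?_
      rw [← hTn]; exact hTne n
    refine ⟨hs, ?_⟩
    rw [hTn, ENNReal.ofReal_tsum_of_nonneg (fun k => mul_nonneg (hB0 n k) (ha k)) hs]
  have hTsq : ∀ n, ENNReal.ofReal ((∑' k, B n k * a k) ^ 2) = T n ^ 2 := by
    intro n
    rw [ENNReal.ofReal_pow (tsum_nonneg (fun k => mul_nonneg (hB0 n k) (ha k))), (hinner n).2]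
  have hmain2 : ∑' n, ENNReal.ofReal ((∑' k, B n k * a k) ^ 2)
      ≤ ENNReal.ofReal (C ^ 2 * ∑' k, a k ^ 2) := by
    rw [← hRHS]
    simp only [hTsq]
    exact hmain
  have hout : Summable (fun n => (∑' k, B n k * a k) ^ 2) := by
    refine aux_summable_of_ne_top _ (fun n => sq_nonneg _) ?_
    exact ne_top_of_le_ne_top ENNReal.ofReal_ne_top hmain2
  have hfinal : ENNReal.ofReal (∑' n, (∑' k, B n k * a k) ^ 2)
      ≤ ENNReal.ofReal (C ^ 2 * ∑' k, a k ^ 2) := by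
    rw [ENNReal.ofReal_tsum_of_nonneg (fun n => sq_nonneg _) hout]
    exact hmain2
  have := (ENNReal.ofReal_le_ofReal_iff (mul_nonneg (sq_nonneg C) (tsum_nonneg (fun k => sq_nonneg (a k))))).1 hfinal
  exact this
end

section
/- Let 0 < α ≤ 2 and 2 ≤ β < 4, and set C = B(2 − β/2, α/2), where B denotes the Beta function. Then for every nonnegative real sequence (b_k)_{k≥1} with Σ_{k=1}^∞ b_k² < ∞, one has Σ_{n=1}^∞ ( Σ_{k=1}^∞ n^{(3−β)/2} k^{(α−1)/2} (n+k)^{-(2−(β−α)/2)} b_k )² ≤ C² Σ_{k=1}^∞ b_k². -/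
open MeasureTheory Set Real

lemma realBeta_integral {s t : ℝ} (hs : 0 < s) (ht : 0 < t) :
    IntegrableOn (fun x : ℝ => x ^ (s-1) * (1-x) ^ (t-1)) (Ioo (0:ℝ) 1) ∧
    ∫ x in Ioo (0:ℝ) 1, x ^ (s-1) * (1-x) ^ (t-1) =
      Real.Gamma s * Real.Gamma t / Real.Gamma (s+t) := by
  have key : Complex.betaIntegral (s : ℂ) (t : ℂ) =
      ((∫ x in (0:ℝ)..1, x ^ (s-1) * (1-x) ^ (t-1) : ℝ) : ℂ) := by
    rw [Complex.betaIntegral, ← intervalIntegral.integral_ofReal]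
    refine intervalIntegral.integral_congr fun x hx => ?_
    rw [Set.uIcc_of_le (by norm_num : (0:ℝ) ≤ 1)] at hx
    have hx0 : 0 ≤ x := hx.1
    have hx1 : 0 ≤ 1 - x := by linarith [hx.2]
    rw [show (1:ℂ) - (x:ℂ) = ((1-x:ℝ):ℂ) by norm_num,
      show (s:ℂ)-1 = ((s-1:ℝ):ℂ) by norm_num,
      show (t:ℂ)-1 = ((t-1:ℝ):ℂ) by norm_num,
      ← Complex.ofReal_cpow hx0, ← Complex.ofReal_cpow hx1, ← Complex.ofReal_mul]
  have hIcplx := Complex.betaIntegral_convergent (u := (s:ℂ)) (v := (t:ℂ))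
    (by simpa using hs) (by simpa using ht)
  -- real integrability on Ioo 0 1
  have hint : IntegrableOn (fun x : ℝ => x ^ (s-1) * (1-x) ^ (t-1)) (Ioo (0:ℝ) 1) := by
    have h1 : IntegrableOn (fun x : ℝ =>
        Complex.reCLM ((x:ℂ) ^ ((s:ℂ)-1) * (1-(x:ℂ)) ^ ((t:ℂ)-1))) (Ioo (0:ℝ) 1) := by
      have := hIcplx.1.mono_set Ioo_subset_Ioc_self
      exact this.re
    refine h1.congr_fun (fun x hx => ?_) measurableSet_Ioo
    have hx0 : (0:ℝ) ≤ x := le_of_lt hx.1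
    have hx1 : (0:ℝ) ≤ 1 - x := by linarith [hx.2]
    have : ((x:ℂ)) ^ ((s:ℂ)-1) * (1-(x:ℂ)) ^ ((t:ℂ)-1)
        = ((x ^ (s-1) * (1-x) ^ (t-1) : ℝ) : ℂ) := by
      rw [show (1:ℂ) - (x:ℂ) = ((1-x:ℝ):ℂ) by norm_num,
        show (s:ℂ)-1 = ((s-1:ℝ):ℂ) by norm_num,
        show (t:ℂ)-1 = ((t-1:ℝ):ℂ) by norm_num,
        ← Complex.ofReal_cpow hx0, ← Complex.ofReal_cpow hx1, ← Complex.ofReal_mul]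
    simp [this]
  refine ⟨hint, ?_⟩
  have hgam := Complex.Gamma_mul_Gamma_eq_betaIntegral (s := (s:ℂ)) (t := (t:ℂ))
    (by simpa using hs) (by simpa using ht)
  rw [key] at hgam
  have : ((Real.Gamma s * Real.Gamma t : ℝ) : ℂ)
      = ((Real.Gamma (s+t) * ∫ x in (0:ℝ)..1, x ^ (s-1) * (1-x) ^ (t-1) : ℝ) : ℂ) := by
    push_cast
    rw [← Complex.Gamma_ofReal, ← Complex.Gamma_ofReal, ← Complex.Gamma_ofReal]
    push_cast at hgam ⊢
    exact hgam
  have hreal := Complex.ofReal_injective this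
  have hpos := Real.Gamma_pos_of_pos (by linarith : (0:ℝ) < s + t)
  have hival : ∫ x in Ioo (0:ℝ) 1, x ^ (s-1) * (1-x) ^ (t-1)
      = ∫ x in (0:ℝ)..1, x ^ (s-1) * (1-x) ^ (t-1) := by
    rw [intervalIntegral.integral_of_le (by norm_num : (0:ℝ) ≤ 1),
      MeasureTheory.integral_Ioc_eq_integral_Ioo]
  rw [hival]
  field_simp
  linarith [hreal]

lemma betaIoi {s t c : ℝ} (hs : 0 < s) (ht : 0 < t) (hc : 0 < c) :
    IntegrableOn (fun x : ℝ => x ^ (s-1) * (x + c) ^ (-(s+t))) (Ioi (0:ℝ)) ∧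
    ∫ x in Ioi (0:ℝ), x ^ (s-1) * (x + c) ^ (-(s+t)) =
      c ^ (-t) * (Real.Gamma s * Real.Gamma t / Real.Gamma (s+t)) := by
  set φ : ℝ → ℝ := fun u => c * u / (1 - u) with hφ
  set φ' : ℝ → ℝ := fun u => c / (1 - u) ^ 2 with hφ'
  have hderiv : ∀ u ∈ Ioo (0:ℝ) 1, HasDerivWithinAt φ (φ' u) (Ioo (0:ℝ) 1) u := by
    intro u hu
    have h1 : (1:ℝ) - u ≠ 0 := by have := hu.2; intro h; linarith [h]
    refine HasDerivAt.hasDerivWithinAt ?_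
    have hd := ((hasDerivAt_id u).const_mul c).div
      ((hasDerivAt_const u 1).sub (hasDerivAt_id u)) h1
    simp only [id_eq] at hd
    have hd' : HasDerivAt φ ((c * 1 * (1 - u) - c * u * (0 - 1)) / (1 - u) ^ 2) u := hd
    refine hd'.congr_deriv ?_
    rw [hφ']
    field_simp
    ring
  have hmono : StrictMonoOn φ (Ioo (0:ℝ) 1) := by
    intro u hu v hv huv
    have h1 : (0:ℝ) < 1 - u := by linarith [hu.2]
    have h2 : (0:ℝ) < 1 - v := by linarith [hv.2]
    simp only [hφ]
    rw [div_lt_div_iff₀ h1 h2]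
    nlinarith [mul_pos hc (sub_pos.mpr huv)]
  have hinj : InjOn φ (Ioo (0:ℝ) 1) := hmono.injOn
  have himg : φ '' (Ioo (0:ℝ) 1) = Ioi (0:ℝ) := by
    ext x
    constructor
    · rintro ⟨u, hu, rfl⟩
      have hu0 : (0:ℝ) < u := hu.1
      have h1 : (0:ℝ) < 1 - u := by linarith [hu.2]
      simp only [hφ, mem_Ioi]
      positivity
    · intro hx
      have hx' : (0:ℝ) < x := hx
      refine ⟨x / (x + c), ⟨by positivity, ?_⟩, ?_⟩
      · rw [div_lt_one (by positivity)]; linarith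
      · have hxc : x + c ≠ 0 := by positivity
        simp only [hφ]
        rw [div_eq_iff]
        · field_simp
          ring
        · have h0 : 0 < 1 - x / (x + c) := by
            rw [sub_pos, div_lt_one (by positivity)]; linarith
          exact h0.ne'
  have hEq : ∀ u ∈ Ioo (0:ℝ) 1,
      |φ' u| • ((fun x : ℝ => x ^ (s-1) * (x + c) ^ (-(s+t))) (φ u))
        = c ^ (-t) * (u ^ (s-1) * (1-u) ^ (t-1)) := by
    intro u hu
    have hu0 : (0:ℝ) < u := hu.1
    have h1 : (0:ℝ) < 1 - u := by linarith [hu.2]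
    have hφc : φ u + c = c / (1 - u) := by
      simp only [hφ]; field_simp; ring
    simp only [hφ, hφ', smul_eq_mul] at hφc ⊢
    rw [hφc, abs_of_pos (by positivity : (0:ℝ) < c / (1-u)^2)]
    have hL : (0:ℝ) < c / (1-u)^2 * ((c * u / (1-u)) ^ (s-1) * (c / (1-u)) ^ (-(s+t))) := by
      positivity
    have hR : (0:ℝ) < c ^ (-t) * (u ^ (s-1) * (1-u) ^ (t-1)) := by positivity
    refine Real.log_injOn_pos (mem_Ioi.mpr hL) (mem_Ioi.mpr hR) ?_
    rw [Real.log_mul (show (c:ℝ)^(-t) ≠ 0 by positivity)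
        (show (u^(s-1)*(1-u)^(t-1) : ℝ) ≠ 0 by positivity),
      Real.log_mul (show (u:ℝ)^(s-1) ≠ 0 by positivity)
        (show ((1-u):ℝ)^(t-1) ≠ 0 by positivity),
      Real.log_mul (show (c / (1-u)^2 : ℝ) ≠ 0 by positivity)
        (show ((c*u/(1-u))^(s-1) * (c/(1-u))^(-(s+t)) : ℝ) ≠ 0 by positivity),
      Real.log_mul (show ((c*u/(1-u))^(s-1) : ℝ) ≠ 0 by positivity)
        (show ((c/(1-u))^(-(s+t)) : ℝ) ≠ 0 by positivity),
      Real.log_div hc.ne' (show ((1-u)^2:ℝ) ≠ 0 by positivity),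
      Real.log_rpow hu0, Real.log_rpow h1, Real.log_rpow hc,
      Real.log_rpow (show (0:ℝ) < c*u/(1-u) by positivity),
      Real.log_rpow (show (0:ℝ) < c/(1-u) by positivity),
      Real.log_div (show (c*u:ℝ) ≠ 0 by positivity) h1.ne',
      Real.log_div hc.ne' h1.ne',
      Real.log_mul hc.ne' hu0.ne', Real.log_pow]
    push_cast
    ring
  have hbeta := realBeta_integral hs ht
  constructor
  · rw [← himg,
      integrableOn_image_iff_integrableOn_abs_deriv_smul measurableSet_Ioo hderiv hinj]
    exact IntegrableOn.congr_fun (hbeta.1.const_mul _) (fun u hu => (hEq u hu).symm)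
      measurableSet_Ioo
  · rw [← himg, integral_image_eq_integral_abs_deriv_smul measurableSet_Ioo hderiv hinj,
      MeasureTheory.setIntegral_congr_fun measurableSet_Ioo hEq]
    rw [MeasureTheory.integral_const_mul, hbeta.2]

lemma sum_le_integral_antitone {f : ℝ → ℝ} (hmono : AntitoneOn f (Ioi 0))
    (hpos : ∀ x ∈ Ioi (0:ℝ), 0 ≤ f x) (hint : IntegrableOn f (Ioi 0)) :
    Summable (fun m : ℕ => f ((m:ℝ)+1)) ∧
      ∑' m : ℕ, f ((m:ℝ)+1) ≤ ∫ x in Ioi (0:ℝ), f x := by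
  have hIoc : ∀ m : ℕ, Ioc (m:ℝ) ((m:ℝ)+1) ⊆ Ioi (0:ℝ) := by
    intro m x hx
    have : (0:ℝ) ≤ (m:ℝ) := Nat.cast_nonneg m
    exact mem_Ioi.mpr (lt_of_le_of_lt this hx.1)
  have hii : ∀ m : ℕ, IntervalIntegrable f volume (m:ℝ) ((m:ℝ)+1) := by
    intro m
    rw [intervalIntegrable_iff_integrableOn_Ioc_of_le (by linarith : (m:ℝ) ≤ (m:ℝ)+1)]
    exact hint.mono_set (hIoc m)
  have hterm : ∀ m : ℕ, f ((m:ℝ)+1) ≤ ∫ x in (m:ℝ)..((m:ℝ)+1), f x := by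
    intro m
    have hvol : volume (Ioc (m:ℝ) ((m:ℝ)+1)) ≠ ⊤ := by
      rw [Real.volume_Ioc]; exact ENNReal.ofReal_ne_top
    have hle : ∀ x ∈ Ioc (m:ℝ) ((m:ℝ)+1), f ((m:ℝ)+1) ≤ f x := by
      intro x hx
      exact hmono (hIoc m hx) (hIoc m (right_mem_Ioc.mpr (by linarith))) hx.2
    have := MeasureTheory.setIntegral_ge_of_const_le measurableSet_Ioc hvol hle
      (hint.mono_set (hIoc m))
    rw [intervalIntegral.integral_of_le (by linarith : (m:ℝ) ≤ (m:ℝ)+1)]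
    calc f ((m:ℝ)+1) = f ((m:ℝ)+1) * (volume (Ioc (m:ℝ) ((m:ℝ)+1))).toReal := by
          rw [Real.volume_Ioc]
          norm_num
      _ ≤ _ := by rw [smul_eq_mul, mul_comm] at this; exact this
  have hnonneg : ∀ m : ℕ, 0 ≤ f ((m:ℝ)+1) := fun m =>
    hpos _ (mem_Ioi.mpr (by positivity))
  have hpartial : ∀ n : ℕ, ∑ m ∈ Finset.range n, f ((m:ℝ)+1) ≤ ∫ x in Ioi (0:ℝ), f x := by
    intro n
    have h1 : ∑ m ∈ Finset.range n, f ((m:ℝ)+1) ≤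
        ∑ m ∈ Finset.range n, ∫ x in (m:ℝ)..((m:ℝ)+1), f x :=
      Finset.sum_le_sum fun m _ => hterm m
    have h2 : ∑ m ∈ Finset.range n, ∫ x in (m:ℝ)..((m:ℝ)+1), f x
        = ∫ x in (0:ℝ)..(n:ℝ), f x := by
      have := intervalIntegral.sum_integral_adjacent_intervals (a := fun i : ℕ => (i:ℝ))
        (μ := volume) (f := f) (n := n) (fun k _ => by exact_mod_cast hii k)
      simpa using this
    have h3 : ∫ x in (0:ℝ)..(n:ℝ), f x ≤ ∫ x in Ioi (0:ℝ), f x := by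
      rw [intervalIntegral.integral_of_le (Nat.cast_nonneg n)]
      refine MeasureTheory.setIntegral_mono_set hint ?_ ?_
      · exact (ae_restrict_iff' measurableSet_Ioi).mpr (ae_of_all _ hpos)
      · exact HasSubset.Subset.eventuallyLE Ioc_subset_Ioi_self
    linarith [h1, h2 ▸ h1, h3]
  have hsum : ∀ u : Finset ℕ, ∑ m ∈ u, f ((m:ℝ)+1) ≤ ∫ x in Ioi (0:ℝ), f x := by
    intro u
    rcases u.eq_empty_or_nonempty with rfl | hne
    · simp
      exact MeasureTheory.setIntegral_nonneg measurableSet_Ioi hpos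
    · have hsub : u ⊆ Finset.range (u.max' hne + 1) := by
        intro m hm
        exact Finset.mem_range.mpr (Nat.lt_succ_of_le (Finset.le_max' u m hm))
      calc ∑ m ∈ u, f ((m:ℝ)+1)
          ≤ ∑ m ∈ Finset.range (u.max' hne + 1), f ((m:ℝ)+1) :=
            Finset.sum_le_sum_of_subset_of_nonneg hsub fun m _ _ => hnonneg m
        _ ≤ _ := hpartial _
  have hsummable : Summable (fun m : ℕ => f ((m:ℝ)+1)) :=
    summable_of_sum_le (fun m => hnonneg m) hsum
  exact ⟨hsummable, hsummable.tsum_le_of_sum_le hsum⟩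

lemma tsum_cauchy_schwarz {u v : ℕ → ℝ} (hu : ∀ k, 0 ≤ u k) (hv : ∀ k, 0 ≤ v k)
    (h2u : Summable fun k => u k ^ 2) (h2v : Summable fun k => v k ^ 2) :
    Summable (fun k => u k * v k) ∧
      (∑' k, u k * v k) ^ 2 ≤ (∑' k, u k ^ 2) * ∑' k, v k ^ 2 := by
  have hsum : Summable (fun k => u k * v k) := by
    refine Summable.of_nonneg_of_le (fun k => mul_nonneg (hu k) (hv k))
      (fun k => ?_) ((h2u.add h2v).mul_left (1/2 : ℝ))
    have := two_mul_le_add_sq (u k) (v k)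
    nlinarith [this]
  refine ⟨hsum, ?_⟩
  have hle : ∑' k, u k * v k ≤ √(∑' k, u k ^ 2) * √(∑' k, v k ^ 2) := by
    refine hsum.tsum_le_of_sum_le fun s => ?_
    calc ∑ i ∈ s, u i * v i
        ≤ √(∑ i ∈ s, u i ^ 2) * √(∑ i ∈ s, v i ^ 2) := Real.sum_mul_le_sqrt_mul_sqrt s u v
      _ ≤ √(∑' k, u k ^ 2) * √(∑' k, v k ^ 2) := by
          apply mul_le_mul
          · exact Real.sqrt_le_sqrt (Summable.sum_le_tsum s (fun i _ => sq_nonneg _) h2u)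
          · exact Real.sqrt_le_sqrt (Summable.sum_le_tsum s (fun i _ => sq_nonneg _) h2v)
          · positivity
          · positivity
  have h0 : 0 ≤ ∑' k, u k * v k := tsum_nonneg fun k => mul_nonneg (hu k) (hv k)
  calc (∑' k, u k * v k) ^ 2 ≤ (√(∑' k, u k ^ 2) * √(∑' k, v k ^ 2)) ^ 2 := by
        exact pow_le_pow_left₀ h0 hle 2
    _ = (∑' k, u k ^ 2) * ∑' k, v k ^ 2 := by
        rw [mul_pow, Real.sq_sqrt (tsum_nonneg fun k => sq_nonneg _),
          Real.sq_sqrt (tsum_nonneg fun k => sq_nonneg _)]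

lemma tsum_swap_le {G : ℕ → ℕ → ℝ} (hG : ∀ n k, 0 ≤ G n k)
    (h1 : ∀ n, Summable (G n)) (h2 : ∀ k, Summable fun n => G n k)
    (h3 : Summable fun k => ∑' n, G n k) :
    Summable (fun n => ∑' k, G n k) ∧
      ∑' n, ∑' k, G n k ≤ ∑' k, ∑' n, G n k := by
  have hbound : ∀ s : Finset ℕ, ∑ n ∈ s, ∑' k, G n k ≤ ∑' k, ∑' n, G n k := by
    intro s
    have e1 : ∑ n ∈ s, ∑' k, G n k = ∑' k, ∑ n ∈ s, G n k :=
      (Summable.tsum_finsetSum fun n _ => h1 n).symm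
    rw [e1]
    refine Summable.tsum_le_tsum (fun k => Summable.sum_le_tsum s (fun n _ => hG n k) (h2 k))
      (summable_sum fun n _ => h1 n) h3
  have hsummable : Summable (fun n => ∑' k, G n k) :=
    summable_of_sum_le (fun n => tsum_nonneg fun k => hG n k) hbound
  exact ⟨hsummable, hsummable.tsum_le_of_sum_le hbound⟩

lemma schur_bound {σ τ c : ℝ} (hσ0 : 0 < σ) (hσ1 : σ ≤ 1) (hτ : 0 < τ) (hc : 0 < c) :
    Summable (fun m : ℕ => ((m:ℝ)+1) ^ (σ-1) * (((m:ℝ)+1) + c) ^ (-(σ+τ))) ∧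
    ∑' m : ℕ, ((m:ℝ)+1) ^ (σ-1) * (((m:ℝ)+1) + c) ^ (-(σ+τ)) ≤
      c ^ (-τ) * (Real.Gamma σ * Real.Gamma τ / Real.Gamma (σ+τ)) := by
  have hbeta := betaIoi hσ0 hτ hc
  have hmono : AntitoneOn (fun x : ℝ => x ^ (σ-1) * (x + c) ^ (-(σ+τ))) (Ioi (0:ℝ)) := by
    intro x hx y hy hxy
    have hx0 : (0:ℝ) < x := hx
    have hy0 : (0:ℝ) < y := hy
    refine mul_le_mul ?_ ?_ (by positivity) (by positivity)
    · exact Real.rpow_le_rpow_of_nonpos hx0 hxy (by linarith)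
    · exact Real.rpow_le_rpow_of_nonpos (by positivity) (by linarith) (by linarith)
  have hpos : ∀ x ∈ Ioi (0:ℝ), 0 ≤ x ^ (σ-1) * (x + c) ^ (-(σ+τ)) := by
    intro x hx
    have : (0:ℝ) < x := hx
    positivity
  have := sum_le_integral_antitone hmono hpos hbeta.1
  exact ⟨this.1, le_trans this.2 (le_of_eq hbeta.2)⟩

lemma rpow_sq' {x : ℝ} (hx : 0 ≤ x) (e : ℝ) : (x ^ e) ^ 2 = x ^ (2*e) := by
  rw [← Real.rpow_natCast (x ^ e) 2, ← Real.rpow_mul hx]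
  norm_num
  rw [mul_comm]

/-- The Hilbert-type inequality for the particular kernel
`K(x,y) = x^{(3-β)/2} y^{(α-1)/2} (x+y)^{-(2-(β-α)/2)}`, with best constant the
Beta function value `B(2-β/2, α/2) = Γ(2-β/2)Γ(α/2)/Γ(2-β/2+α/2)`. -/
theorem stmt_2 (α β : ℝ) (hα : 0 < α) (hα' : α ≤ 2) (hβ : 2 ≤ β) (hβ' : β < 4)
    (C : ℝ)
    (hC : C = Real.Gamma (2 - β / 2) * Real.Gamma (α / 2) /
      Real.Gamma ((2 - β / 2) + α / 2)) :
    ∀ b : ℕ → ℝ, (∀ k : ℕ, 0 ≤ b k) → Summable (fun k : ℕ => b k ^ 2) →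
      ∑' n : ℕ, (∑' k : ℕ, ((n : ℝ) + 1) ^ ((3 - β) / 2) * ((k : ℝ) + 1) ^ ((α - 1) / 2) *
          (((n : ℝ) + 1) + ((k : ℝ) + 1)) ^ (-(2 - (β - α) / 2)) * b k) ^ 2 ≤
        C ^ 2 * ∑' k : ℕ, b k ^ 2 := by
  intro b hb hsb
  set p : ℝ := 2 - (β - α) / 2 with hp
  have hp0 : 0 < p := by rw [hp]; linarith
  have hs1 : (0:ℝ) < α/2 := by linarith
  have hs1' : α/2 ≤ 1 := by linarith
  have ht1 : (0:ℝ) < 2 - β/2 := by linarith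
  have ht1' : 2 - β/2 ≤ 1 := by linarith
  have hC0 : 0 < C := by
    rw [hC]
    have := Real.Gamma_pos_of_pos ht1
    have := Real.Gamma_pos_of_pos hs1
    have := Real.Gamma_pos_of_pos (show (0:ℝ) < (2-β/2) + α/2 by linarith)
    positivity
  -- the two factor functions in Cauchy-Schwarz
  set u : ℕ → ℕ → ℝ := fun n k =>
    ((n:ℝ)+1) ^ ((4-β)/4) * (((k:ℝ)+1) ^ ((α-2)/4) * (((n:ℝ)+1) + ((k:ℝ)+1)) ^ (-(p/2)))
    with hu
  set v : ℕ → ℕ → ℝ := fun n k =>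
    ((n:ℝ)+1) ^ ((2-β)/4) * (((k:ℝ)+1) ^ (α/4) * (((n:ℝ)+1) + ((k:ℝ)+1)) ^ (-(p/2))) * b k
    with hv
  have hNpos : ∀ m : ℕ, (0:ℝ) < (m:ℝ)+1 := fun m => by positivity
  have hN1 : ∀ m : ℕ, (1:ℝ) ≤ (m:ℝ)+1 := fun m => by
    have : (0:ℝ) ≤ (m:ℝ) := Nat.cast_nonneg m
    linarith
  have hu0 : ∀ n k, 0 ≤ u n k := by
    intro n k
    rw [hu]
    have := hNpos n; have := hNpos k
    positivity
  have hv0 : ∀ n k, 0 ≤ v n k := by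
    intro n k
    rw [hv]
    have := hNpos n; have := hNpos k; have := hb k
    positivity
  -- key algebraic identities
  have keyuv : ∀ n k, u n k * v n k =
      ((n:ℝ)+1) ^ ((3-β)/2) * ((k:ℝ)+1) ^ ((α-1)/2) *
        (((n:ℝ)+1) + ((k:ℝ)+1)) ^ (-p) * b k := by
    intro n k
    have hn := hNpos n; have hk := hNpos k
    have hnk : (0:ℝ) < ((n:ℝ)+1) + ((k:ℝ)+1) := by positivity
    rw [hu, hv]
    have e1 : ((n:ℝ)+1) ^ ((4-β)/4) * ((n:ℝ)+1) ^ ((2-β)/4) = ((n:ℝ)+1) ^ ((3-β)/2) := by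
      rw [← Real.rpow_add hn]; rw [show (4-β)/4 + (2-β)/4 = (3-β)/2 by ring]
    have e2 : ((k:ℝ)+1) ^ ((α-2)/4) * ((k:ℝ)+1) ^ (α/4) = ((k:ℝ)+1) ^ ((α-1)/2) := by
      rw [← Real.rpow_add hk]; rw [show (α-2)/4 + α/4 = (α-1)/2 by ring]
    have e3 : (((n:ℝ)+1) + ((k:ℝ)+1)) ^ (-(p/2)) * (((n:ℝ)+1) + ((k:ℝ)+1)) ^ (-(p/2))
        = (((n:ℝ)+1) + ((k:ℝ)+1)) ^ (-p) := by
      rw [← Real.rpow_add hnk]; congr 1; ring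
    calc ((n:ℝ)+1) ^ ((4-β)/4) * (((k:ℝ)+1) ^ ((α-2)/4) * (((n:ℝ)+1) + ((k:ℝ)+1)) ^ (-(p/2)))
          * (((n:ℝ)+1) ^ ((2-β)/4) * (((k:ℝ)+1) ^ (α/4) * (((n:ℝ)+1) + ((k:ℝ)+1)) ^ (-(p/2))) * b k)
        = (((n:ℝ)+1) ^ ((4-β)/4) * ((n:ℝ)+1) ^ ((2-β)/4)) *
            ((((k:ℝ)+1) ^ ((α-2)/4) * ((k:ℝ)+1) ^ (α/4)) *
            ((((n:ℝ)+1) + ((k:ℝ)+1)) ^ (-(p/2)) * (((n:ℝ)+1) + ((k:ℝ)+1)) ^ (-(p/2)))) * b k := by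
          ring
      _ = _ := by rw [e1, e2, e3]; ring
  have keyu2 : ∀ n k, (u n k) ^ 2 =
      ((n:ℝ)+1) ^ ((4-β)/2) * (((k:ℝ)+1) ^ ((α-2)/2) * (((n:ℝ)+1) + ((k:ℝ)+1)) ^ (-p)) := by
    intro n k
    have hn := hNpos n; have hk := hNpos k
    have hnk : (0:ℝ) < ((n:ℝ)+1) + ((k:ℝ)+1) := by positivity
    rw [hu]
    rw [mul_pow, mul_pow, rpow_sq' hn.le, rpow_sq' hk.le, rpow_sq' hnk.le,
      show (2:ℝ)*((4-β)/4) = (4-β)/2 by ring,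
      show (2:ℝ)*((α-2)/4) = (α-2)/2 by ring,
      show (2:ℝ)*(-(p/2)) = -p by ring]
  have keyv2 : ∀ n k, (v n k) ^ 2 =
      (((k:ℝ)+1) ^ (α/2) * b k ^ 2) *
        (((n:ℝ)+1) ^ ((2-β)/2) * (((n:ℝ)+1) + ((k:ℝ)+1)) ^ (-p)) := by
    intro n k
    have hn := hNpos n; have hk := hNpos k
    have hnk : (0:ℝ) < ((n:ℝ)+1) + ((k:ℝ)+1) := by positivity
    rw [hv]
    rw [mul_pow, mul_pow, mul_pow, rpow_sq' hn.le, rpow_sq' hk.le, rpow_sq' hnk.le,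
      show (2:ℝ)*((2-β)/4) = (2-β)/2 by ring,
      show (2:ℝ)*(α/4) = α/2 by ring,
      show (2:ℝ)*(-(p/2)) = -p by ring]
    ring
  -- Schur bounds
  -- row bound (sum over k, for fixed n)
  have hrow : ∀ n : ℕ, Summable (fun k => (u n k)^2) ∧ ∑' k, (u n k)^2 ≤ C := by
    intro n
    have hn := hNpos n
    have hsch := schur_bound hs1 hs1' ht1 hn
    have hconv : (fun k : ℕ => ((k:ℝ)+1) ^ (α/2-1) * (((k:ℝ)+1) + ((n:ℝ)+1)) ^ (-(α/2+(2-β/2))))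
        = fun k : ℕ => ((k:ℝ)+1) ^ ((α-2)/2) * (((n:ℝ)+1) + ((k:ℝ)+1)) ^ (-p) := by
      funext k
      rw [show α/2-1 = (α-2)/2 by ring, show -(α/2+(2-β/2)) = -p by rw [hp]; ring,
        add_comm ((k:ℝ)+1) ((n:ℝ)+1)]
    rw [hconv] at hsch
    constructor
    · refine Summable.congr (hsch.1.mul_left (((n:ℝ)+1) ^ ((4-β)/2))) fun k => ?_
      rw [keyu2]
    · have e1 : ∑' k, (u n k)^2
          = ((n:ℝ)+1) ^ ((4-β)/2) * ∑' k : ℕ, ((k:ℝ)+1) ^ ((α-2)/2) * (((n:ℝ)+1) + ((k:ℝ)+1)) ^ (-p) := by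
        rw [← tsum_mul_left]
        exact tsum_congr fun k => keyu2 n k
      rw [e1]
      have hbound := hsch.2
      have hCeq : Real.Gamma (α/2) * Real.Gamma (2-β/2) / Real.Gamma (α/2+(2-β/2)) = C := by
        rw [hC, show α/2+(2-β/2) = (2-β/2)+α/2 by ring]
        ring
      calc ((n:ℝ)+1) ^ ((4-β)/2) * ∑' k : ℕ, ((k:ℝ)+1) ^ ((α-2)/2) * (((n:ℝ)+1) + ((k:ℝ)+1)) ^ (-p)
          ≤ ((n:ℝ)+1) ^ ((4-β)/2) * (((n:ℝ)+1) ^ (-(2-β/2)) * C) := by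
            refine mul_le_mul_of_nonneg_left ?_ (by positivity)
            rw [← hCeq]
            exact hbound
        _ = C := by
            rw [← mul_assoc, ← Real.rpow_add hn,
              show (4-β)/2 + -(2-β/2) = 0 by ring, Real.rpow_zero, one_mul]
  -- column bound (sum over n, for fixed k)
  have hcol : ∀ k : ℕ, Summable (fun n => (v n k)^2) ∧ ∑' n, (v n k)^2 ≤ C * b k ^ 2 := by
    intro k
    have hk := hNpos k
    have hsch := schur_bound ht1 ht1' hs1 hk
    have hconv : (fun n : ℕ => ((n:ℝ)+1) ^ ((2-β/2)-1) * (((n:ℝ)+1) + ((k:ℝ)+1)) ^ (-((2-β/2)+α/2)))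
        = fun n : ℕ => ((n:ℝ)+1) ^ ((2-β)/2) * (((n:ℝ)+1) + ((k:ℝ)+1)) ^ (-p) := by
      funext n
      rw [show (2-β/2)-1 = (2-β)/2 by ring, show -((2-β/2)+α/2) = -p by rw [hp]; ring]
    rw [hconv] at hsch
    constructor
    · refine Summable.congr (hsch.1.mul_left (((k:ℝ)+1) ^ (α/2) * b k ^ 2)) fun n => ?_
      rw [keyv2]
    · have e1 : ∑' n, (v n k)^2
          = (((k:ℝ)+1) ^ (α/2) * b k ^ 2) *
            ∑' n : ℕ, ((n:ℝ)+1) ^ ((2-β)/2) * (((n:ℝ)+1) + ((k:ℝ)+1)) ^ (-p) := by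
        rw [← tsum_mul_left]
        exact tsum_congr fun n => keyv2 n k
      rw [e1]
      have hCeq : Real.Gamma (2-β/2) * Real.Gamma (α/2) / Real.Gamma ((2-β/2)+α/2) = C := by
        rw [hC]
      calc (((k:ℝ)+1) ^ (α/2) * b k ^ 2) *
            ∑' n : ℕ, ((n:ℝ)+1) ^ ((2-β)/2) * (((n:ℝ)+1) + ((k:ℝ)+1)) ^ (-p)
          ≤ (((k:ℝ)+1) ^ (α/2) * b k ^ 2) * (((k:ℝ)+1) ^ (-(α/2)) * C) := by
            refine mul_le_mul_of_nonneg_left ?_ (by positivity)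
            rw [← hCeq]
            exact hsch.2
        _ = C * (((k:ℝ)+1) ^ (α/2) * ((k:ℝ)+1) ^ (-(α/2))) * b k ^ 2 := by ring
        _ = C * b k ^ 2 := by
            rw [← Real.rpow_add hk, show α/2 + -(α/2) = 0 by ring, Real.rpow_zero]
            ring
  -- pointwise domination for summability of v^2 in k
  have hvle : ∀ n k, (v n k)^2 ≤ b k ^ 2 := by
    intro n k
    have hn := hNpos n; have hk := hNpos k
    have hnk : (0:ℝ) < ((n:ℝ)+1) + ((k:ℝ)+1) := by positivity
    have h1 : ((n:ℝ)+1) ^ ((2-β)/4) ≤ 1 :=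
      Real.rpow_le_one_of_one_le_of_nonpos (hN1 n) (by linarith)
    have h2 : (((n:ℝ)+1) + ((k:ℝ)+1)) ^ (-(p/2)) ≤ ((k:ℝ)+1) ^ (-(p/2)) := by
      refine Real.rpow_le_rpow_of_nonpos hk (by linarith [hNpos n]) (by linarith)
    have h3 : ((k:ℝ)+1) ^ (α/4) * ((k:ℝ)+1) ^ (-(p/2)) ≤ 1 := by
      rw [← Real.rpow_add hk]
      refine Real.rpow_le_one_of_one_le_of_nonpos (hN1 k) ?_
      rw [hp]; linarith
    have hvb : v n k ≤ b k := by
      rw [hv]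
      calc ((n:ℝ)+1) ^ ((2-β)/4) * (((k:ℝ)+1) ^ (α/4) * (((n:ℝ)+1) + ((k:ℝ)+1)) ^ (-(p/2))) * b k
          ≤ 1 * (((k:ℝ)+1) ^ (α/4) * ((k:ℝ)+1) ^ (-(p/2))) * b k := by
            refine mul_le_mul_of_nonneg_right ?_ (hb k)
            refine mul_le_mul h1 ?_ (by positivity) (by norm_num)
            exact mul_le_mul_of_nonneg_left h2 (by positivity)
        _ ≤ 1 * 1 * b k := by
            refine mul_le_mul_of_nonneg_right ?_ (hb k)
            simpa using h3
        _ = b k := by ring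
    calc (v n k)^2 ≤ (b k)^2 := pow_le_pow_left₀ (hv0 n k) hvb 2
      _ = b k ^ 2 := rfl
  -- summability of v^2 in k for fixed n
  have hrowv : ∀ n : ℕ, Summable (fun k => (v n k)^2) := by
    intro n
    exact Summable.of_nonneg_of_le (fun k => sq_nonneg _) (fun k => hvle n k) hsb
  -- the double sum swap
  have hswap := tsum_swap_le (G := fun n k => (v n k)^2) (fun n k => sq_nonneg _)
    hrowv (fun k => (hcol k).1)
    (Summable.of_nonneg_of_le (fun k => tsum_nonneg fun n => sq_nonneg _)
      (fun k => (hcol k).2) (hsb.mul_left C))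
  -- Cauchy-Schwarz per n
  have hcs : ∀ n : ℕ,
      (∑' k : ℕ, ((n:ℝ)+1) ^ ((3-β)/2) * ((k:ℝ)+1) ^ ((α-1)/2) *
        (((n:ℝ)+1) + ((k:ℝ)+1)) ^ (-p) * b k) ^ 2 ≤ C * ∑' k, (v n k)^2 := by
    intro n
    have hA : (∑' k : ℕ, ((n:ℝ)+1) ^ ((3-β)/2) * ((k:ℝ)+1) ^ ((α-1)/2) *
        (((n:ℝ)+1) + ((k:ℝ)+1)) ^ (-p) * b k) = ∑' k, u n k * v n k :=
      tsum_congr fun k => (keyuv n k).symm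
    rw [hA]
    have hCS := tsum_cauchy_schwarz (hu0 n) (hv0 n) (hrow n).1 (hrowv n)
    calc (∑' k, u n k * v n k) ^ 2 ≤ (∑' k, (u n k)^2) * ∑' k, (v n k)^2 := hCS.2
      _ ≤ C * ∑' k, (v n k)^2 := by
          refine mul_le_mul_of_nonneg_right (hrow n).2 ?_
          exact tsum_nonneg fun k => sq_nonneg _
  -- assemble
  have hsumA : Summable (fun n : ℕ =>
      (∑' k : ℕ, ((n:ℝ)+1) ^ ((3-β)/2) * ((k:ℝ)+1) ^ ((α-1)/2) *
        (((n:ℝ)+1) + ((k:ℝ)+1)) ^ (-p) * b k) ^ 2) := by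
    refine Summable.of_nonneg_of_le (fun n => sq_nonneg _) (fun n => hcs n)
      (hswap.1.mul_left C)
  calc ∑' n : ℕ, (∑' k : ℕ, ((n:ℝ)+1) ^ ((3-β)/2) * ((k:ℝ)+1) ^ ((α-1)/2) *
        (((n:ℝ)+1) + ((k:ℝ)+1)) ^ (-p) * b k) ^ 2
      ≤ ∑' n, C * ∑' k, (v n k)^2 :=
        Summable.tsum_le_tsum hcs hsumA (hswap.1.mul_left C)
    _ = C * ∑' n, ∑' k, (v n k)^2 := tsum_mul_left
    _ ≤ C * ∑' k, ∑' n, (v n k)^2 := mul_le_mul_of_nonneg_left hswap.2 hC0.le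
    _ ≤ C * ∑' k, C * b k ^ 2 := by
        refine mul_le_mul_of_nonneg_left ?_ hC0.le
        refine Summable.tsum_le_tsum (fun k => (hcol k).2) ?_ (hsb.mul_left C)
        exact Summable.of_nonneg_of_le (fun k => tsum_nonneg fun n => sq_nonneg _)
          (fun k => (hcol k).2) (hsb.mul_left C)
    _ = C ^ 2 * ∑' k, b k ^ 2 := by
        rw [tsum_mul_left]
        ring
end

section
/- Let 0 < α ≤ 2 and 2 ≤ β < 4, and set s = 2 − (β−α)/2. Let μ be a positive Borel measure on [0,1) whose moments satisfy n^s · μ_n → 0 as n → ∞ (and μ_n = O(n^{-(α/2+ε)}) for some ε > 0). Then lim_{m→∞} sup { Σ_{n=m+1}^∞ (n+1)^{3−β} |Σ_{k=0}^∞ μ_{n+k} a_k|² : (a_k) complex sequence with Σ_{k=0}^∞ (k+1)^{1−α}|a_k|² ≤ 1 } = 0. In particular, DH_μ is the operator-norm limit of the finite-rank truncations DH_{μ,m}(f)(z) = Σ_{n=0}^m (Σ_{k=0}^∞ μ_{n+k} a_k)(n+1) z^n, and hence DH_μ is a compact operator from D_α into D_β. -/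
open MeasureTheory Filter

section auxlemmas

lemma auxA (q : ℝ) (hq : -1 < q) : ∃ K > (0:ℝ), ∀ M : ℕ, 1 ≤ M →
    ∑ j ∈ Finset.range M, ((j:ℝ)+1)^q ≤ K * (M:ℝ)^(q+1) := by
  rcases le_or_gt 0 q with h0 | h0
  · refine ⟨1, one_pos, fun M hM => ?_⟩
    have hM1 : (1:ℝ) ≤ (M:ℝ) := by exact_mod_cast hM
    have hMpos : (0:ℝ) < (M:ℝ) := by linarith
    calc ∑ j ∈ Finset.range M, ((j:ℝ)+1)^q ≤ ∑ _j ∈ Finset.range M, (M:ℝ)^q := by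
          refine Finset.sum_le_sum fun j hj => ?_
          have h1 : j < M := Finset.mem_range.mp hj
          have h2 : (j:ℝ)+1 ≤ (M:ℝ) := by exact_mod_cast Nat.succ_le_of_lt h1
          exact Real.rpow_le_rpow (by positivity) h2 h0
      _ = (M:ℝ) * (M:ℝ)^q := by
          rw [Finset.sum_const, Finset.card_range, nsmul_eq_mul]
      _ = 1 * (M:ℝ)^(q+1) := by
          rw [Real.rpow_add hMpos, Real.rpow_one]; ring
  · have hq1 : (0:ℝ) < q + 1 := by linarith
    refine ⟨1 + 1/(q+1), by have := one_div_pos.mpr hq1; linarith, fun M hM => ?_⟩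
    obtain ⟨n, rfl⟩ : ∃ n, M = n + 1 := ⟨M - 1, by omega⟩
    have hM1 : (1:ℝ) ≤ ((n+1:ℕ):ℝ) := by exact_mod_cast hM
    have hE1 : (1:ℝ) ≤ ((n+1:ℕ):ℝ)^(q+1) := Real.one_le_rpow hM1 (by linarith)
    have hanti : AntitoneOn (fun x : ℝ => x ^ q) (Set.Icc 1 (1 + (n:ℝ))) := by
      intro x hx y hy hxy
      exact Real.rpow_le_rpow_of_nonpos (lt_of_lt_of_le one_pos hx.1) hxy h0.le
    have hint := hanti.sum_le_integral
    have hval : ∫ x in (1:ℝ)..1+(n:ℝ), x ^ q = ((1+(n:ℝ)) ^ (q+1) - 1) / (q+1) := by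
      rw [integral_rpow (Or.inl hq), Real.one_rpow]
    have heq : ∑ i ∈ Finset.range n, (((i+1:ℕ):ℝ)+1)^q
        = ∑ i ∈ Finset.range n, (fun x:ℝ => x^q) (1 + ((i+1:ℕ):ℝ)) := by
      refine Finset.sum_congr rfl fun i _ => ?_
      push_cast; ring_nf
    have hcast : (1+(n:ℝ)) = ((n+1:ℕ):ℝ) := by push_cast; ring
    have hle : ∑ i ∈ Finset.range n, (((i+1:ℕ):ℝ)+1)^q
        ≤ (((n+1:ℕ):ℝ) ^ (q+1) - 1) / (q+1) := by
      rw [heq, ← hcast, ← hval]; exact hint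
    have h2 : (((n+1:ℕ):ℝ) ^ (q+1) - 1) / (q+1) ≤ 1/(q+1) * ((n+1:ℕ):ℝ)^(q+1) := by
      rw [div_le_iff₀ hq1]
      have : 1/(q+1) * (q+1) = 1 := by field_simp
      nlinarith [hE1]
    rw [Finset.sum_range_succ']
    simp only [Nat.cast_zero, zero_add, Real.one_rpow]
    have := hle.trans h2
    nlinarith [hE1, this]

/-- Tail sums of `(M+i)^(-r)` are `O(M^(1-r))` for `r > 1`. -/

lemma auxB (r : ℝ) (hr : 1 < r) : ∃ K > (0:ℝ), ∀ M : ℕ, 1 ≤ M → ∀ n : ℕ,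
    ∑ i ∈ Finset.range n, ((M:ℝ)+(i:ℝ))^(-r) ≤ K * (M:ℝ)^(1-r) := by
  have hr1 : (0:ℝ) < r - 1 := by linarith
  refine ⟨1 + 1/(r-1), by positivity, fun M hM n => ?_⟩
  have hM1 : (1:ℝ) ≤ (M:ℝ) := by exact_mod_cast hM
  have hMpos : (0:ℝ) < (M:ℝ) := by linarith
  have hMr : (0:ℝ) < (M:ℝ)^(1-r) := Real.rpow_pos_of_pos hMpos _
  rcases n with - | n'
  · simp only [Finset.range_zero, Finset.sum_empty]
    positivity
  · have hanti : AntitoneOn (fun x : ℝ => x ^ (-r)) (Set.Icc (M:ℝ) ((M:ℝ) + (n':ℝ))) := by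
      intro x hx y hy hxy
      exact Real.rpow_le_rpow_of_nonpos (lt_of_lt_of_le hMpos hx.1) hxy (by linarith)
    have hint := hanti.sum_le_integral
    have h0uIcc : (0:ℝ) ∉ Set.uIcc (M:ℝ) ((M:ℝ)+(n':ℝ)) :=
      Set.notMem_uIcc_of_lt hMpos (by positivity)
    have hval : ∫ x in (M:ℝ)..(M:ℝ)+(n':ℝ), x ^ (-r)
        = (((M:ℝ)+(n':ℝ)) ^ (-r+1) - (M:ℝ)^(-r+1)) / (-r+1) := by
      rw [integral_rpow (Or.inr ⟨by intro h; rw [neg_eq_iff_eq_neg] at h; linarith, h0uIcc⟩)]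
    have hbound : (((M:ℝ)+(n':ℝ)) ^ (-r+1) - (M:ℝ)^(-r+1)) / (-r+1)
        ≤ 1/(r-1) * (M:ℝ)^(1-r) := by
      have he : (-r+1) = 1-r := by ring
      rw [he]
      have hpos : (0:ℝ) ≤ ((M:ℝ)+(n':ℝ))^(1-r) := Real.rpow_nonneg (by positivity) _
      rw [div_le_iff_of_neg (by linarith : (1-r) < 0)]
      have : 1/(r-1) * (M:ℝ)^(1-r) * (1-r) = -(M:ℝ)^(1-r) := by
        field_simp; ring
      rw [this]
      linarith
    rw [Finset.sum_range_succ']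
    have hle : ∑ i ∈ Finset.range n', ((M:ℝ)+((i+1:ℕ):ℝ))^(-r)
        ≤ 1/(r-1) * (M:ℝ)^(1-r) := by
      refine le_trans ?_ (hval ▸ hint |>.trans hbound)
      exact le_of_eq rfl
    have h00 : ((M:ℝ)+((0:ℕ):ℝ))^(-r) ≤ (M:ℝ)^(1-r) := by
      simp only [Nat.cast_zero, add_zero]
      exact Real.rpow_le_rpow_of_exponent_le hM1 (by linarith)
    rw [add_mul, one_mul]
    exact (add_le_add hle h00).trans (le_of_eq (by ring))

lemma two_bound (q : ℝ) {x y : ℝ} (hx : 0 < x) (h1 : x ≤ y) (h2 : y ≤ 2*x) :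
    x ^ q ≤ 2^|q| * y^q := by
  have hy : 0 < y := lt_of_lt_of_le hx h1
  have h2q : (1:ℝ) ≤ 2^|q| := Real.one_le_rpow one_le_two (abs_nonneg q)
  rcases le_or_gt 0 q with h0 | h0
  · calc x^q ≤ y^q := Real.rpow_le_rpow hx.le h1 h0
      _ = 1 * y^q := (one_mul _).symm
      _ ≤ 2^|q| * y^q := by
          have := Real.rpow_nonneg hy.le q
          exact mul_le_mul_of_nonneg_right h2q this
  · have habs : |q| = -q := abs_of_neg h0
    have hyx : y/2 ≤ x := by linarith
    have hy2 : (0:ℝ) < y/2 := by linarith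
    calc x^q ≤ (y/2)^q := Real.rpow_le_rpow_of_nonpos hy2 hyx h0.le
      _ = y^q / 2^q := Real.div_rpow hy.le (by norm_num : (0:ℝ) ≤ 2) q
      _ = 2^|q| * y^q := by
          rw [habs, Real.rpow_neg (by norm_num : (0:ℝ) ≤ 2)]
          field_simp

lemma auxC (q r : ℝ) (hq : -1 < q) (hqr : q + 1 < r) : ∃ K > (0:ℝ), ∀ M : ℕ, 1 ≤ M → ∀ n : ℕ,
    ∑ j ∈ Finset.range n, ((j:ℝ)+1)^q * ((j:ℝ)+(M:ℝ))^(-r) ≤ K * (M:ℝ)^(q+1-r) := by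
  obtain ⟨KA, hKA, hA⟩ := auxA q hq
  obtain ⟨KB, hKB, hB⟩ := auxB (r-q) (by linarith)
  have hrpos : (0:ℝ) < r := by linarith
  refine ⟨KA + 2^|q| * KB * 2^(q+1-r), by positivity, fun M hM n => ?_⟩
  have hM1 : (1:ℝ) ≤ (M:ℝ) := by exact_mod_cast hM
  have hMpos : (0:ℝ) < (M:ℝ) := by linarith
  set f : ℕ → ℝ := fun j => ((j:ℝ)+1)^q * ((j:ℝ)+(M:ℝ))^(-r) with hf
  have hf0 : ∀ j, 0 ≤ f j := fun j => by
    have h1 : (0:ℝ) < (j:ℝ)+1 := by positivity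
    have h2 : (0:ℝ) < (j:ℝ)+(M:ℝ) := by positivity
    positivity
  have hsub : ∑ j ∈ Finset.range n, f j ≤ ∑ j ∈ Finset.range (M+n), f j :=
    Finset.sum_le_sum_of_subset_of_nonneg
      (Finset.range_subset_range.mpr (by omega)) (fun j _ _ => hf0 j)
  rw [Finset.sum_range_add] at hsub
  -- part 1
  have hpart1 : ∑ j ∈ Finset.range M, f j ≤ KA * (M:ℝ)^(q+1-r) := by
    have h1 : ∀ j ∈ Finset.range M, f j ≤ ((j:ℝ)+1)^q * (M:ℝ)^(-r) := by
      intro j _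
      refine mul_le_mul_of_nonneg_left ?_ (Real.rpow_nonneg (by positivity) q)
      exact Real.rpow_le_rpow_of_nonpos hMpos (by linarith [Nat.cast_nonneg (α := ℝ) j])
        (by linarith)
    calc ∑ j ∈ Finset.range M, f j ≤ ∑ j ∈ Finset.range M, ((j:ℝ)+1)^q * (M:ℝ)^(-r) :=
          Finset.sum_le_sum h1
      _ = (∑ j ∈ Finset.range M, ((j:ℝ)+1)^q) * (M:ℝ)^(-r) := by
          rw [Finset.sum_mul]
      _ ≤ KA * (M:ℝ)^(q+1) * (M:ℝ)^(-r) := by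
          refine mul_le_mul_of_nonneg_right (hA M hM) (Real.rpow_nonneg hMpos.le _)
      _ = KA * (M:ℝ)^(q+1-r) := by
          rw [mul_assoc, ← Real.rpow_add hMpos]
          ring_nf
  -- part 2
  have hpart2 : ∑ i ∈ Finset.range n, f (M+i) ≤ 2^|q| * KB * 2^(q+1-r) * (M:ℝ)^(q+1-r) := by
    have h2 : ∀ i ∈ Finset.range n, f (M+i) ≤ 2^|q| * (((2*M:ℕ):ℝ)+(i:ℝ))^(-(r-q)) := by
      intro i _
      have hcast : ((M+i:ℕ):ℝ) = (M:ℝ)+(i:ℝ) := by push_cast; ring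
      have hbase : (0:ℝ) < (M:ℝ)+(i:ℝ)+(M:ℝ) := by positivity
      have hxpos : (0:ℝ) < (M:ℝ)+(i:ℝ)+1 := by positivity
      have hb1 : f (M+i) = ((M:ℝ)+(i:ℝ)+1)^q * ((M:ℝ)+(i:ℝ)+(M:ℝ))^(-r) := by
        rw [hf]; push_cast; ring_nf
      rw [hb1]
      have h3 : ((M:ℝ)+(i:ℝ)+1)^q ≤ 2^|q| * ((M:ℝ)+(i:ℝ)+(M:ℝ))^q :=
        two_bound q hxpos (by linarith) (by linarith)
      have h4 : ((M:ℝ)+(i:ℝ)+1)^q * ((M:ℝ)+(i:ℝ)+(M:ℝ))^(-r)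
          ≤ 2^|q| * ((M:ℝ)+(i:ℝ)+(M:ℝ))^q * ((M:ℝ)+(i:ℝ)+(M:ℝ))^(-r) :=
        mul_le_mul_of_nonneg_right h3 (Real.rpow_nonneg hbase.le _)
      refine h4.trans (le_of_eq ?_)
      rw [mul_assoc, ← Real.rpow_add hbase]
      have : ((2*M:ℕ):ℝ)+(i:ℝ) = (M:ℝ)+(i:ℝ)+(M:ℝ) := by push_cast; ring
      rw [this]
      norm_num
      left
      ring
    calc ∑ i ∈ Finset.range n, f (M+i)
        ≤ ∑ i ∈ Finset.range n, 2^|q| * (((2*M:ℕ):ℝ)+(i:ℝ))^(-(r-q)) :=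
          Finset.sum_le_sum h2
      _ = 2^|q| * ∑ i ∈ Finset.range n, (((2*M:ℕ):ℝ)+(i:ℝ))^(-(r-q)) := by
          rw [Finset.mul_sum]
      _ ≤ 2^|q| * (KB * ((2*M:ℕ):ℝ)^(1-(r-q))) := by
          refine mul_le_mul_of_nonneg_left (hB (2*M) (by omega) n) (by positivity)
      _ = 2^|q| * KB * 2^(q+1-r) * (M:ℝ)^(q+1-r) := by
          have h5 : ((2*M:ℕ):ℝ) = 2*(M:ℝ) := by push_cast; ring
          rw [h5, show (1-(r-q)) = q+1-r by ring,
            Real.mul_rpow (by norm_num) hMpos.le]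
          ring
  calc ∑ j ∈ Finset.range n, f j ≤ _ := hsub
    _ ≤ KA * (M:ℝ)^(q+1-r) + 2^|q| * KB * 2^(q+1-r) * (M:ℝ)^(q+1-r) :=
        add_le_add hpart1 hpart2
    _ = (KA + 2^|q| * KB * 2^(q+1-r)) * (M:ℝ)^(q+1-r) := by ring

lemma auxC' (q r : ℝ) (hq : -1 < q) (hqr : q + 1 < r) : ∃ K > (0:ℝ), ∀ M : ℕ, 1 ≤ M →
    Summable (fun j : ℕ => ((j:ℝ)+1)^q * ((j:ℝ)+(M:ℝ))^(-r)) ∧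
    ∑' j : ℕ, ((j:ℝ)+1)^q * ((j:ℝ)+(M:ℝ))^(-r) ≤ K * (M:ℝ)^(q+1-r) := by
  obtain ⟨K, hK, h⟩ := auxC q r hq hqr
  refine ⟨K, hK, fun M hM => ?_⟩
  have hnn : ∀ j:ℕ, 0 ≤ ((j:ℝ)+1)^q * ((j:ℝ)+(M:ℝ))^(-r) := by
    intro j
    have h1 : (0:ℝ) < (j:ℝ)+1 := by positivity
    have h2 : (0:ℝ) ≤ (j:ℝ)+(M:ℝ) := by positivity
    positivity
  exact ⟨summable_of_sum_range_le hnn (fun n => h M hM n),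
    Real.tsum_le_of_sum_range_le hnn (fun n => h M hM n)⟩

lemma tsum_cs2 (u v w : ℕ → ℝ) (hu0 : ∀ k, 0 ≤ u k) (hv0 : ∀ k, 0 ≤ v k)
    (hw0 : ∀ k, 0 ≤ w k) (hprod : ∀ k, w k ^ 2 = u k * v k)
    (hu : Summable u) (hv : Summable v) :
    Summable w ∧ (∑' k, w k)^2 ≤ (∑' k, u k) * (∑' k, v k) := by
  have hwle : ∀ k, w k ≤ (u k + v k)/2 := by
    intro k
    nlinarith [hprod k, sq_nonneg (u k - v k), hw0 k, hu0 k, hv0 k,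
      sq_nonneg (w k - (u k + v k)/2), sq_nonneg (u k + v k)]
  have hwsum : Summable w := Summable.of_nonneg_of_le hw0 hwle ((hu.add hv).div_const 2)
  refine ⟨hwsum, ?_⟩
  have hA : 0 ≤ ∑' k, u k := tsum_nonneg hu0
  have hB : 0 ≤ ∑' k, v k := tsum_nonneg hv0
  have key : ∑' k, w k ≤ Real.sqrt ((∑' k, u k) * (∑' k, v k)) := by
    apply Summable.tsum_le_of_sum_le hwsum
    intro s
    have h1 : (∑ k ∈ s, w k)^2 ≤ (∑ k ∈ s, u k) * (∑ k ∈ s, v k) :=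
      Finset.sum_sq_le_sum_mul_sum_of_sq_eq_mul s (fun k _ => hu0 k) (fun k _ => hv0 k)
        (fun k _ => hprod k)
    have h2 : (∑ k ∈ s, u k) * (∑ k ∈ s, v k) ≤ (∑' k, u k) * (∑' k, v k) :=
      mul_le_mul (Summable.sum_le_tsum s (fun k _ => hu0 k) hu) (Summable.sum_le_tsum s (fun k _ => hv0 k) hv)
        (Finset.sum_nonneg fun k _ => hv0 k) hA
    have h3 : 0 ≤ ∑ k ∈ s, w k := Finset.sum_nonneg fun k _ => hw0 k
    calc ∑ k ∈ s, w k = Real.sqrt ((∑ k ∈ s, w k)^2) := (Real.sqrt_sq h3).symm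
      _ ≤ Real.sqrt ((∑' k, u k) * (∑' k, v k)) := Real.sqrt_le_sqrt (h1.trans h2)
  have h0 : 0 ≤ ∑' k, w k := tsum_nonneg hw0
  calc (∑' k, w k)^2 ≤ (Real.sqrt ((∑' k, u k) * (∑' k, v k)))^2 :=
        pow_le_pow_left₀ h0 key 2
    _ = (∑' k, u k) * (∑' k, v k) := Real.sq_sqrt (mul_nonneg hA hB)

lemma two_shift {x t : ℝ} (hx : 1 ≤ x) (ht : t ≤ 1) : (x+1)^t ≤ 2*x^t := by
  have hx0 : (0:ℝ) < x := by linarith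
  rcases le_or_gt 0 t with h0 | h0
  · calc (x+1)^t ≤ (2*x)^t := Real.rpow_le_rpow (by linarith) (by linarith) h0
      _ = 2^t * x^t := Real.mul_rpow (by norm_num) hx0.le
      _ ≤ 2*x^t := by
          have h2 : (2:ℝ)^t ≤ 2^(1:ℝ) := Real.rpow_le_rpow_of_exponent_le one_le_two ht
          rw [Real.rpow_one] at h2
          exact mul_le_mul_of_nonneg_right h2 (Real.rpow_nonneg hx0.le t)
  · have h1 : (x+1)^t ≤ x^t := Real.rpow_le_rpow_of_nonpos hx0 (by linarith) h0.le
    have h2 : 0 ≤ x^t := Real.rpow_nonneg hx0.le t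
    linarith

lemma auxShift (F : ℕ → ℝ) (hF : ∀ j, 0 ≤ F j) (m KK : ℕ) :
    ∑ x ∈ Finset.range KK, F (m + x) ≤ ∑ j ∈ Finset.range (m+KK), F j := by
  rw [Finset.sum_range_add]
  exact le_add_of_nonneg_left (Finset.sum_nonneg fun j _ => hF j)

end auxlemmas

/-- If `n^s μ_n → 0` with `s = 2-(β-α)/2` (and `μ_n = O(n^{-(α/2+ε)})`), then the
supremum over the unit ball of `D_α` of the `D_β`-norms of the tails of `DH_μ(f)`
tends to `0`; hence `DH_μ` is a norm limit of finite-rank operators and is compact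
from `D_α` into `D_β`. -/
theorem stmt_12 (α β : ℝ) (hα : 0 < α) (hα' : α ≤ 2) (hβ : 2 ≤ β) (hβ' : β < 4)
    (s : ℝ) (hs : s = 2 - (β - α) / 2)
    (μ : Measure ℝ) [IsFiniteMeasure μ]
    (hmom : ∃ ε > (0 : ℝ), ∃ C > (0 : ℝ), ∀ n : ℕ, 1 ≤ n →
      moment μ n ≤ C * (n : ℝ) ^ (-(α / 2 + ε)))
    (hsmall : Tendsto (fun n : ℕ => (n : ℝ) ^ s * moment μ n) atTop (nhds 0)) :
    ∀ ε > (0 : ℝ), ∃ M : ℕ, ∀ m : ℕ, M ≤ m → ∀ a : ℕ → ℂ,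
      Summable (fun k : ℕ => ((k : ℝ) + 1) ^ (1 - α) * ‖a k‖ ^ 2) →
      (∑' k : ℕ, ((k : ℝ) + 1) ^ (1 - α) * ‖a k‖ ^ 2) ≤ 1 →
      ∑' n : ℕ, ((n : ℝ) + (m : ℝ) + 2) ^ (3 - β) *
          ‖∑' k : ℕ, (moment μ (n + m + 1 + k) : ℂ) * a k‖ ^ 2 ≤ ε := by
  intro ε hε
  have hmom0 : ∀ j : ℕ, 0 ≤ moment μ j := by
    intro j
    apply setIntegral_nonneg measurableSet_Ico
    intro t ht
    exact pow_nonneg ht.1 j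
  have hs0 : 0 < s := by rw [hs]; linarith
  have h2s : 2*s = 4 - β + α := by rw [hs]; ring
  set L : ℝ := max (-1) ((α+β)/2-3) with hL
  set U : ℝ := min (α-1) (1-(β-α)/2) with hU
  have hLU : L < U := by
    apply max_lt
    · apply lt_min <;> linarith
    · apply lt_min <;> linarith
  set c : ℝ := (L+U)/2 with hcdef
  have hcL : L < c := by rw [hcdef]; linarith
  have hcU : c < U := by rw [hcdef]; linarith
  have hc1 : -1 < c := lt_of_le_of_lt (le_max_left _ _) hcL
  have hc2 : c < α - 1 := lt_of_lt_of_le hcU (min_le_left _ _)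
  have hc3 : c + 1 < s := by
    have h1 := lt_of_lt_of_le hcU (min_le_right _ _)
    rw [hs]; linarith
  have hc4 : α - 1 - s < c := by
    have h1 : (α+β)/2-3 ≤ L := le_max_right _ _
    rw [hs]; linarith
  set q : ℝ := 4 - β + c - s with hqdef
  have hq1 : -1 < q := by
    have h1 : (α+β)/2-3 ≤ L := le_max_right _ _
    rw [hqdef, hs]; linarith
  have hq2 : q + 1 < s := by rw [hqdef]; linarith
  have hexp : q + 1 - s + -c = 1 - α := by rw [hqdef]; linarith
  have hexp2 : (3-β) + (c+1-s) = q := by rw [hqdef]; ring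
  obtain ⟨K₁, hK₁, hMas1⟩ := auxC' c s hc1 hc3
  obtain ⟨K₂, hK₂, hMas2⟩ := auxC q s hq1 hq2
  set δ : ℝ := Real.sqrt (ε / (2*K₁*K₂)) with hδdef
  have hδpos : 0 < δ := Real.sqrt_pos.mpr (by positivity)
  have hδsq : δ^2 = ε/(2*K₁*K₂) := Real.sq_sqrt (by positivity)
  obtain ⟨M₀, hM₀⟩ := Metric.tendsto_atTop.mp hsmall δ hδpos
  refine ⟨M₀ + 1, fun m hm a hb hb1 => ?_⟩
  -- smallness of moments
  have hv : ∀ j : ℕ, m + 1 ≤ j → moment μ j ≤ δ * (j:ℝ)^(-s) := by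
    intro j hj
    have hjpos : (0:ℝ) < (j:ℝ) := by
      have : 1 ≤ j := by omega
      exact_mod_cast Nat.lt_of_lt_of_le Nat.zero_lt_one this
    have h := hM₀ j (by omega)
    rw [Real.dist_eq, sub_zero] at h
    have hlt : (j:ℝ)^s * moment μ j < δ := lt_of_le_of_lt (le_abs_self _) h
    have hrp : (0:ℝ) < (j:ℝ)^(-s) := Real.rpow_pos_of_pos hjpos _
    have heq : moment μ j = (j:ℝ)^(-s) * ((j:ℝ)^s * moment μ j) := by
      rw [← mul_assoc, ← Real.rpow_add hjpos]
      simp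
    rw [heq]
    calc (j:ℝ)^(-s) * ((j:ℝ)^s * moment μ j) ≤ (j:ℝ)^(-s) * δ :=
          mul_le_mul_of_nonneg_left hlt.le hrp.le
      _ = δ * (j:ℝ)^(-s) := mul_comm _ _
  -- per (n,k) bound for the "g2" function
  have hbd2 : ∀ n k : ℕ, moment μ (n+m+1+k) * (((k:ℝ)+1)^(-c) * ‖a k‖^2)
      ≤ δ * (((k:ℝ)+1)^(1-α) * ‖a k‖^2) := by
    intro n k
    have hk1 : (0:ℝ) < (k:ℝ)+1 := by positivity
    have hmle : moment μ (n+m+1+k) ≤ δ * ((k:ℝ)+1)^(-s) := by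
      refine (hv (n+m+1+k) (by omega)).trans ?_
      refine mul_le_mul_of_nonneg_left ?_ hδpos.le
      refine Real.rpow_le_rpow_of_nonpos hk1 ?_ (by linarith)
      have h1 : ((n+m+1+k:ℕ):ℝ) = (n:ℝ)+(m:ℝ)+1+(k:ℝ) := by push_cast; ring
      rw [h1]
      have := Nat.cast_nonneg (α := ℝ) n
      have := Nat.cast_nonneg (α := ℝ) m
      linarith
    have hXnn : (0:ℝ) ≤ ((k:ℝ)+1)^(-c) * ‖a k‖^2 := by positivity
    calc moment μ (n+m+1+k) * (((k:ℝ)+1)^(-c) * ‖a k‖^2)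
        ≤ (δ * ((k:ℝ)+1)^(-s)) * (((k:ℝ)+1)^(-c) * ‖a k‖^2) :=
          mul_le_mul_of_nonneg_right hmle hXnn
      _ = δ * ((((k:ℝ)+1)^(-s) * ((k:ℝ)+1)^(-c)) * ‖a k‖^2) := by ring
      _ = δ * (((k:ℝ)+1)^(-s + -c) * ‖a k‖^2) := by rw [Real.rpow_add hk1]
      _ ≤ δ * (((k:ℝ)+1)^(1-α) * ‖a k‖^2) := by
          refine mul_le_mul_of_nonneg_left
            (mul_le_mul_of_nonneg_right ?_ (sq_nonneg _)) hδpos.le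
          exact Real.rpow_le_rpow_of_exponent_le (by linarith) (by linarith)
  have hg2nn : ∀ n k : ℕ, (0:ℝ) ≤ moment μ (n+m+1+k) * (((k:ℝ)+1)^(-c) * ‖a k‖^2) := by
    intro n k
    have := hmom0 (n+m+1+k)
    positivity
  have hsum2 : ∀ n : ℕ, Summable (fun k : ℕ =>
      moment μ (n+m+1+k) * (((k:ℝ)+1)^(-c) * ‖a k‖^2)) := by
    intro n
    exact Summable.of_nonneg_of_le (hg2nn n) (hbd2 n) (hb.mul_left δ)
  have hS2nn : ∀ n : ℕ, (0:ℝ) ≤ ∑' k, moment μ (n+m+1+k) * (((k:ℝ)+1)^(-c) * ‖a k‖^2) :=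
    fun n => tsum_nonneg (hg2nn n)
  -- the key per-n estimate
  have key : ∀ n : ℕ, ((n:ℝ) + (m:ℝ) + 2) ^ (3 - β) *
        ‖∑' k : ℕ, (moment μ (n + m + 1 + k) : ℂ) * a k‖ ^ 2
      ≤ 2*δ*K₁ * ∑' k : ℕ, ((n+m+1:ℕ):ℝ)^q *
          (moment μ (n+m+1+k) * (((k:ℝ)+1)^(-c) * ‖a k‖^2)) := by
    intro n
    have hNr1 : (1:ℝ) ≤ ((n+m+1:ℕ):ℝ) := by exact_mod_cast Nat.le_add_left 1 (n+m)
    have hNrpos : (0:ℝ) < ((n+m+1:ℕ):ℝ) := by linarith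
    -- g1 facts
    have hg1nn : ∀ k : ℕ, (0:ℝ) ≤ moment μ (n+m+1+k) * ((k:ℝ)+1)^c := by
      intro k
      have h0 := hmom0 (n+m+1+k)
      have h1 : (0:ℝ) < (k:ℝ)+1 := by positivity
      positivity
    obtain ⟨hm1sum, hm1le⟩ := hMas1 (n+m+1) (by omega)
    have hbd1 : ∀ k : ℕ, moment μ (n+m+1+k) * ((k:ℝ)+1)^c
        ≤ δ * (((k:ℝ)+1)^c * ((k:ℝ)+((n+m+1:ℕ):ℝ))^(-s)) := by
      intro k
      have hk1 : (0:ℝ) ≤ ((k:ℝ)+1)^c := Real.rpow_nonneg (by positivity) c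
      have hcast : ((n+m+1+k:ℕ):ℝ) = (k:ℝ)+((n+m+1:ℕ):ℝ) := by push_cast; ring
      have h1 : moment μ (n+m+1+k) ≤ δ * ((k:ℝ)+((n+m+1:ℕ):ℝ))^(-s) := by
        rw [← hcast]; exact hv _ (by omega)
      calc moment μ (n+m+1+k) * ((k:ℝ)+1)^c
          ≤ (δ * ((k:ℝ)+((n+m+1:ℕ):ℝ))^(-s)) * ((k:ℝ)+1)^c :=
            mul_le_mul_of_nonneg_right h1 hk1
        _ = δ * (((k:ℝ)+1)^c * ((k:ℝ)+((n+m+1:ℕ):ℝ))^(-s)) := by ring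
      
    have hg1sum : Summable (fun k : ℕ => moment μ (n+m+1+k) * ((k:ℝ)+1)^c) :=
      Summable.of_nonneg_of_le hg1nn hbd1 (hm1sum.mul_left δ)
    have hS1le : ∑' k, moment μ (n+m+1+k) * ((k:ℝ)+1)^c
        ≤ δ * (K₁ * ((n+m+1:ℕ):ℝ)^(c+1-s)) := by
      calc ∑' k, moment μ (n+m+1+k) * ((k:ℝ)+1)^c
          ≤ ∑' k : ℕ, δ * (((k:ℝ)+1)^c * ((k:ℝ)+((n+m+1:ℕ):ℝ))^(-s)) :=
            Summable.tsum_le_tsum hbd1 hg1sum (hm1sum.mul_left δ)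
        _ = δ * ∑' k : ℕ, ((k:ℝ)+1)^c * ((k:ℝ)+((n+m+1:ℕ):ℝ))^(-s) := tsum_mul_left
        _ ≤ δ * (K₁ * ((n+m+1:ℕ):ℝ)^(c+1-s)) :=
            mul_le_mul_of_nonneg_left hm1le hδpos.le
    -- Cauchy-Schwarz
    have hprod : ∀ k : ℕ, (moment μ (n+m+1+k) * ‖a k‖)^2
        = (moment μ (n+m+1+k) * ((k:ℝ)+1)^c) *
          (moment μ (n+m+1+k) * (((k:ℝ)+1)^(-c) * ‖a k‖^2)) := by
      intro k
      have hk1 : (0:ℝ) < (k:ℝ)+1 := by positivity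
      have hone : ((k:ℝ)+1)^c * ((k:ℝ)+1)^(-c) = 1 := by
        rw [← Real.rpow_add hk1]; simp
      linear_combination (-(moment μ (n+m+1+k))^2 * ‖a k‖^2) * hone
    obtain ⟨hwsum, hCS⟩ := tsum_cs2 _ _ _ hg1nn (hg2nn n)
      (fun k => mul_nonneg (hmom0 _) (norm_nonneg _)) hprod hg1sum (hsum2 n)
    -- norm bound
    have hnrm : ∀ k : ℕ, ‖(moment μ (n+m+1+k) : ℂ) * a k‖ = moment μ (n+m+1+k) * ‖a k‖ := by
      intro k
      rw [norm_mul, Complex.norm_real, Real.norm_eq_abs, abs_of_nonneg (hmom0 _)]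
    have hsumnorm : Summable (fun k : ℕ => ‖(moment μ (n+m+1+k) : ℂ) * a k‖) := by
      exact (show (fun k : ℕ => ‖(moment μ (n+m+1+k) : ℂ) * a k‖)
        = fun k => moment μ (n+m+1+k) * ‖a k‖ from funext hnrm) ▸ hwsum
    have hnormle : ‖∑' k : ℕ, (moment μ (n+m+1+k) : ℂ) * a k‖
        ≤ ∑' k, moment μ (n+m+1+k) * ‖a k‖ := by
      refine (norm_tsum_le_tsum_norm hsumnorm).trans ?_
      exact le_of_eq (tsum_congr hnrm)
    have hI2 : ‖∑' k : ℕ, (moment μ (n+m+1+k) : ℂ) * a k‖^2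
        ≤ (δ * (K₁ * ((n+m+1:ℕ):ℝ)^(c+1-s))) *
          ∑' k, moment μ (n+m+1+k) * (((k:ℝ)+1)^(-c) * ‖a k‖^2) := by
      calc ‖∑' k : ℕ, (moment μ (n+m+1+k) : ℂ) * a k‖^2
          ≤ (∑' k, moment μ (n+m+1+k) * ‖a k‖)^2 :=
            pow_le_pow_left₀ (norm_nonneg _) hnormle 2
        _ ≤ (∑' k, moment μ (n+m+1+k) * ((k:ℝ)+1)^c) *
            ∑' k, moment μ (n+m+1+k) * (((k:ℝ)+1)^(-c) * ‖a k‖^2) := hCS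
        _ ≤ _ := mul_le_mul_of_nonneg_right hS1le (hS2nn n)
    -- weight bound
    have hwgt : ((n:ℝ) + (m:ℝ) + 2) ^ (3 - β) ≤ 2 * ((n+m+1:ℕ):ℝ)^(3-β) := by
      have hbase : (n:ℝ) + (m:ℝ) + 2 = ((n+m+1:ℕ):ℝ) + 1 := by push_cast; ring
      rw [hbase]
      exact two_shift hNr1 (by linarith)
    have hNN : ((n+m+1:ℕ):ℝ)^(3-β) * ((n+m+1:ℕ):ℝ)^(c+1-s) = ((n+m+1:ℕ):ℝ)^q := by
      rw [← Real.rpow_add hNrpos, hexp2]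
    calc ((n:ℝ) + (m:ℝ) + 2) ^ (3 - β) * ‖∑' k : ℕ, (moment μ (n+m+1+k) : ℂ) * a k‖ ^ 2
        ≤ (2 * ((n+m+1:ℕ):ℝ)^(3-β)) * ((δ * (K₁ * ((n+m+1:ℕ):ℝ)^(c+1-s))) *
            ∑' k, moment μ (n+m+1+k) * (((k:ℝ)+1)^(-c) * ‖a k‖^2)) := by
          refine mul_le_mul hwgt hI2 (sq_nonneg _) ?_
          positivity
      _ = 2*δ*K₁ * (((n+m+1:ℕ):ℝ)^q *
            ∑' k, moment μ (n+m+1+k) * (((k:ℝ)+1)^(-c) * ‖a k‖^2)) := by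
          linear_combination (2*δ*K₁ *
            ∑' k, moment μ (n+m+1+k) * (((k:ℝ)+1)^(-c) * ‖a k‖^2)) * hNN
      _ = 2*δ*K₁ * ∑' k : ℕ, ((n+m+1:ℕ):ℝ)^q *
            (moment μ (n+m+1+k) * (((k:ℝ)+1)^(-c) * ‖a k‖^2)) := by
          rw [tsum_mul_left]
  -- summability of the H function
  have hHsum : ∀ n : ℕ, Summable (fun k : ℕ => ((n+m+1:ℕ):ℝ)^q *
      (moment μ (n+m+1+k) * (((k:ℝ)+1)^(-c) * ‖a k‖^2))) :=
    fun n => (hsum2 n).mul_left _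
  -- nonnegativity of the terms of the main series
  have hterm0 : ∀ n : ℕ, 0 ≤ ((n:ℝ) + (m:ℝ) + 2) ^ (3 - β) *
      ‖∑' k : ℕ, (moment μ (n + m + 1 + k) : ℂ) * a k‖ ^ 2 := by
    intro n
    have h1 : (0:ℝ) < (n:ℝ)+(m:ℝ)+2 := by positivity
    positivity
  apply Real.tsum_le_of_sum_range_le hterm0
  intro KK
  -- inner estimate after swapping the sums
  have hHinner : ∀ k : ℕ, ∑ n ∈ Finset.range KK, ((n+m+1:ℕ):ℝ)^q *
        (moment μ (n+m+1+k) * (((k:ℝ)+1)^(-c) * ‖a k‖^2))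
      ≤ δ*K₂*(((k:ℝ)+1)^(1-α) * ‖a k‖^2) := by
    intro k
    have hk1 : (0:ℝ) < (k:ℝ)+1 := by positivity
    have hXnn : (0:ℝ) ≤ ((k:ℝ)+1)^(-c) * ‖a k‖^2 := by positivity
    have hFnn : ∀ j : ℕ, (0:ℝ) ≤ ((j:ℝ)+1)^q * ((j:ℝ)+((k+1:ℕ):ℝ))^(-s) := by
      intro j
      have h1 : (0:ℝ) < (j:ℝ)+1 := by positivity
      have h2 : (0:ℝ) ≤ (j:ℝ)+((k+1:ℕ):ℝ) := by positivity
      positivity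
    have hstep : ∀ n ∈ Finset.range KK, ((n+m+1:ℕ):ℝ)^q *
          (moment μ (n+m+1+k) * (((k:ℝ)+1)^(-c) * ‖a k‖^2))
        ≤ δ * ((((m+n:ℕ):ℝ)+1)^q * (((m+n:ℕ):ℝ)+((k+1:ℕ):ℝ))^(-s) *
            (((k:ℝ)+1)^(-c) * ‖a k‖^2)) := by
      intro n _
      have e1 : ((m+n:ℕ):ℝ)+1 = ((n+m+1:ℕ):ℝ) := by push_cast; ring
      have e2 : ((m+n:ℕ):ℝ)+((k+1:ℕ):ℝ) = ((n+m+1+k:ℕ):ℝ) := by push_cast; ring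
      rw [e1, e2]
      have h1 : moment μ (n+m+1+k) ≤ δ * ((n+m+1+k:ℕ):ℝ)^(-s) := hv _ (by omega)
      have hNq : (0:ℝ) ≤ ((n+m+1:ℕ):ℝ)^q := Real.rpow_nonneg (Nat.cast_nonneg _) q
      calc ((n+m+1:ℕ):ℝ)^q * (moment μ (n+m+1+k) * (((k:ℝ)+1)^(-c) * ‖a k‖^2))
          ≤ ((n+m+1:ℕ):ℝ)^q * ((δ * ((n+m+1+k:ℕ):ℝ)^(-s)) * (((k:ℝ)+1)^(-c) * ‖a k‖^2)) :=
            mul_le_mul_of_nonneg_left (mul_le_mul_of_nonneg_right h1 hXnn) hNq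
        _ = δ * (((n+m+1:ℕ):ℝ)^q * ((n+m+1+k:ℕ):ℝ)^(-s) * (((k:ℝ)+1)^(-c) * ‖a k‖^2)) := by
            ring
    have hsum_le : ∑ n ∈ Finset.range KK, ((n+m+1:ℕ):ℝ)^q *
          (moment μ (n+m+1+k) * (((k:ℝ)+1)^(-c) * ‖a k‖^2))
        ≤ δ * ((∑ n ∈ Finset.range KK, (((m+n:ℕ):ℝ)+1)^q * (((m+n:ℕ):ℝ)+((k+1:ℕ):ℝ))^(-s)) *
            (((k:ℝ)+1)^(-c) * ‖a k‖^2)) := by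
      calc ∑ n ∈ Finset.range KK, ((n+m+1:ℕ):ℝ)^q *
            (moment μ (n+m+1+k) * (((k:ℝ)+1)^(-c) * ‖a k‖^2))
          ≤ ∑ n ∈ Finset.range KK, δ * ((((m+n:ℕ):ℝ)+1)^q *
              (((m+n:ℕ):ℝ)+((k+1:ℕ):ℝ))^(-s) * (((k:ℝ)+1)^(-c) * ‖a k‖^2)) :=
            Finset.sum_le_sum hstep
        _ = δ * ((∑ n ∈ Finset.range KK, (((m+n:ℕ):ℝ)+1)^q *
              (((m+n:ℕ):ℝ)+((k+1:ℕ):ℝ))^(-s)) * (((k:ℝ)+1)^(-c) * ‖a k‖^2)) := by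
            rw [Finset.sum_mul, Finset.mul_sum]
    have hFbound : (∑ n ∈ Finset.range KK, (((m+n:ℕ):ℝ)+1)^q *
          (((m+n:ℕ):ℝ)+((k+1:ℕ):ℝ))^(-s)) ≤ K₂ * ((k+1:ℕ):ℝ)^(q+1-s) := by
      refine le_trans (auxShift (fun j : ℕ => ((j:ℝ)+1)^q * ((j:ℝ)+((k+1:ℕ):ℝ))^(-s))
        hFnn m KK) ?_
      exact hMas2 (k+1) (by omega) (m+KK)
    have hrw : ((k+1:ℕ):ℝ) = (k:ℝ)+1 := by push_cast; ring
    have hfinal : δ * ((K₂ * ((k:ℝ)+1)^(q+1-s)) * (((k:ℝ)+1)^(-c) * ‖a k‖^2))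
        = δ*K₂*(((k:ℝ)+1)^(1-α) * ‖a k‖^2) := by
      have hpow : ((k:ℝ)+1)^(q+1-s) * ((k:ℝ)+1)^(-c) = ((k:ℝ)+1)^(1-α) := by
        rw [← Real.rpow_add hk1, hexp]
      linear_combination (δ*K₂*‖a k‖^2) * hpow
    calc ∑ n ∈ Finset.range KK, ((n+m+1:ℕ):ℝ)^q *
          (moment μ (n+m+1+k) * (((k:ℝ)+1)^(-c) * ‖a k‖^2))
        ≤ δ * ((∑ n ∈ Finset.range KK, (((m+n:ℕ):ℝ)+1)^q *
            (((m+n:ℕ):ℝ)+((k+1:ℕ):ℝ))^(-s)) * (((k:ℝ)+1)^(-c) * ‖a k‖^2)) := hsum_le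
      _ ≤ δ * ((K₂ * ((k+1:ℕ):ℝ)^(q+1-s)) * (((k:ℝ)+1)^(-c) * ‖a k‖^2)) := by
          refine mul_le_mul_of_nonneg_left (mul_le_mul_of_nonneg_right hFbound hXnn) hδpos.le
      _ = δ*K₂*(((k:ℝ)+1)^(1-α) * ‖a k‖^2) := by rw [hrw] at *; exact hfinal
  calc ∑ n ∈ Finset.range KK, ((n:ℝ) + (m:ℝ) + 2) ^ (3 - β) *
        ‖∑' k : ℕ, (moment μ (n + m + 1 + k) : ℂ) * a k‖ ^ 2
      ≤ ∑ n ∈ Finset.range KK, 2*δ*K₁ * ∑' k : ℕ, ((n+m+1:ℕ):ℝ)^q *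
          (moment μ (n+m+1+k) * (((k:ℝ)+1)^(-c) * ‖a k‖^2)) :=
        Finset.sum_le_sum (fun n _ => key n)
    _ = 2*δ*K₁ * ∑ n ∈ Finset.range KK, ∑' k : ℕ, ((n+m+1:ℕ):ℝ)^q *
          (moment μ (n+m+1+k) * (((k:ℝ)+1)^(-c) * ‖a k‖^2)) := by
        rw [← Finset.mul_sum]
    _ = 2*δ*K₁ * ∑' k : ℕ, ∑ n ∈ Finset.range KK, ((n+m+1:ℕ):ℝ)^q *
          (moment μ (n+m+1+k) * (((k:ℝ)+1)^(-c) * ‖a k‖^2)) := by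
        rw [← Summable.tsum_finsetSum (fun n _ => hHsum n)]
    _ ≤ 2*δ*K₁ * (δ*K₂) := by
        refine mul_le_mul_of_nonneg_left ?_ (by positivity)
        calc ∑' k : ℕ, ∑ n ∈ Finset.range KK, ((n+m+1:ℕ):ℝ)^q *
              (moment μ (n+m+1+k) * (((k:ℝ)+1)^(-c) * ‖a k‖^2))
            ≤ ∑' k : ℕ, δ*K₂*(((k:ℝ)+1)^(1-α) * ‖a k‖^2) :=
              Summable.tsum_le_tsum hHinner (summable_sum (fun n _ => hHsum n))
                (hb.mul_left (δ*K₂))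
          _ = δ*K₂ * ∑' k : ℕ, ((k:ℝ)+1)^(1-α) * ‖a k‖^2 := tsum_mul_left
          _ ≤ δ*K₂*1 := mul_le_mul_of_nonneg_left hb1 (by positivity)
          _ = δ*K₂ := mul_one _
    _ = ε := by
        have h1 : 2*δ*K₁*(δ*K₂) = (2*K₁*K₂)*δ^2 := by ring
        rw [h1, hδsq]
        field_simp
end
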